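/- arXiv:2603.30011 — 5 statements merged into one kernel-verified Lean document; each statement's English description precedes it below -/
import Mathlib

section
/- Let f be a C¹ vector field on ℝⁿ generating a complete flow φ : ℝ × ℝⁿ → ℝⁿ, let X ⊂ ℝⁿ be a compact invariant set of the flow, let δ > 0, and let H be an affine hyperplane of ℝⁿ such that every point of the δ-local basin of attraction B_δ(X) reaches H in finite forward time, i.e. for every x ∈ B_δ(X) there exists τ ≥ 0 with φ(τ, x) ∈ H. If the n-dimensional Lebesgue measure of B_δ(X) is positive, then the (n−1)-dimensional Lebesgue measure of H ∩ B_δ(X) (computed in H) is positive. -/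
open MeasureTheory Set
open scoped ENNReal NNReal

lemma aux_exists_cover {Y : Type*} [EMetricSpace Y] [MeasurableSpace Y] [BorelSpace Y]
    {d : ℝ} (hd : 0 < d) {E : Set Y} (hE : μH[d] E = 0)
    {r' ε₁ : ℝ≥0∞} (hr' : 0 < r') (hε₁ : 0 < ε₁) :
    ∃ t : ℕ → Set Y, (E ⊆ ⋃ m, t m) ∧ (∀ m, EMetric.diam (t m) ≤ r') ∧
      ∑' m, EMetric.diam (t m) ^ d ≤ ε₁ := by
  rw [Measure.hausdorffMeasure_apply] at hE
  have h1 : (⨅ (t : ℕ → Set Y) (_ : E ⊆ ⋃ n, t n) (_ : ∀ n, EMetric.diam (t n) ≤ r'),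
      ∑' n, ⨆ _ : (t n).Nonempty, EMetric.diam (t n) ^ d) = 0 := by
    refine le_antisymm ?_ zero_le
    rw [← hE]
    exact le_iSup₂ (f := fun (r : ℝ≥0∞) (_ : 0 < r) =>
      ⨅ (t : ℕ → Set Y) (_ : E ⊆ ⋃ n, t n) (_ : ∀ n, EMetric.diam (t n) ≤ r),
        ∑' n, ⨆ _ : (t n).Nonempty, EMetric.diam (t n) ^ d) r' hr'
  have h2 : (⨅ (t : ℕ → Set Y) (_ : E ⊆ ⋃ n, t n) (_ : ∀ n, EMetric.diam (t n) ≤ r'),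
      ∑' n, ⨆ _ : (t n).Nonempty, EMetric.diam (t n) ^ d) < ε₁ := h1 ▸ hε₁
  rw [iInf_lt_iff] at h2
  obtain ⟨t, ht⟩ := h2
  rw [iInf_lt_iff] at ht
  obtain ⟨hcov, ht⟩ := ht
  rw [iInf_lt_iff] at ht
  obtain ⟨hsmall, hsum⟩ := ht
  refine ⟨t, hcov, hsmall, ?_⟩
  have heq : ∑' m, EMetric.diam (t m) ^ d
      = ∑' n, ⨆ _ : (t n).Nonempty, EMetric.diam (t n) ^ d := by
    refine tsum_congr fun m => ?_
    by_cases h : (t m).Nonempty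
    · rw [iSup_pos h]
    · rw [not_nonempty_iff_eq_empty] at h
      simp [h, EMetric.diam, ENNReal.zero_rpow_of_pos hd]
  rw [heq]; exact hsum.le

lemma aux_image_null {Y Z : Type*} [MetricSpace Y] [MetricSpace Z]
    [MeasurableSpace Y] [BorelSpace Y] [MeasurableSpace Z] [BorelSpace Z]
    {d : ℝ} (hd : 0 < d) {E : Set Y} (hE : μH[d] E = 0)
    {T C : ℝ} (hT : 0 ≤ T) (hC : 1 ≤ C)
    {D : Set (ℝ × Y)} (hD : D ⊆ Set.Icc 0 T ×ˢ E)
    {F : ℝ × Y → Z}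
    (hF : ∀ p ∈ D, ∀ q ∈ D, dist (F p) (F q) ≤ C * max |p.1 - q.1| (dist p.2 q.2)) :
    μH[d + 1] (F '' D) = 0 := by
  have hC0 : 0 < C := lt_of_lt_of_le one_pos hC
  have hd1 : (0:ℝ) < d + 1 := by linarith
  refine le_antisymm ?_ zero_le
  refine ENNReal.le_of_forall_pos_le_add fun ε hε _ => ?_
  rw [zero_add]
  set Q : ℝ := C ^ (d + 1) * (T + 2) with hQdef
  have hCd : 0 < C ^ (d + 1) := Real.rpow_pos_of_pos hC0 (d + 1)
  have hQ0 : 0 < Q := by positivity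
  set ε₂ : ℝ := (ε : ℝ) / (2 * (Q + 1)) with hε₂def
  have hε₂ : 0 < ε₂ := by positivity
  rw [Measure.hausdorffMeasure_apply]
  refine iSup₂_le fun r hr => ?_
  have hmr : (0:ℝ≥0∞) < min r 1 := lt_min hr zero_lt_one
  have hmrt : (min r 1) ≠ ⊤ := ne_top_of_le_ne_top ENNReal.one_ne_top (min_le_right _ _)
  have hmrpos : 0 < (min r 1).toReal := ENNReal.toReal_pos hmr.ne' hmrt
  set ρ : ℝ := min 1 ((min r 1).toReal / C) with hρdef
  have hρ0 : 0 < ρ := by positivity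
  have hρ1 : ρ ≤ 1 := min_le_left _ _
  have hρr : C * ρ ≤ (min r 1).toReal := by
    calc C * ρ ≤ C * ((min r 1).toReal / C) :=
          mul_le_mul_of_nonneg_left (min_le_right _ _) hC0.le
    _ = (min r 1).toReal := mul_div_cancel₀ _ hC0.ne'
  obtain ⟨t, hcov, hsmall, hsum⟩ := aux_exists_cover hd hE
    (ENNReal.ofReal_pos.2 hρ0) (ENNReal.ofReal_pos.2 hε₂)
  have hdiam_ne : ∀ m, EMetric.diam (t m) ≠ ⊤ :=
    fun m => ne_top_of_le_ne_top ENNReal.ofReal_ne_top (hsmall m)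
  set a : ℕ → ℝ := fun m => (EMetric.diam (t m)).toReal with hadef
  have ha0 : ∀ m, 0 ≤ a m := fun m => ENNReal.toReal_nonneg
  have haρ : ∀ m, a m ≤ ρ := by
    intro m
    have := ENNReal.toReal_mono ENNReal.ofReal_ne_top (hsmall m)
    rwa [ENNReal.toReal_ofReal hρ0.le] at this
  set η : ℕ → ℝ := fun m => min ρ ((ε₂ * (1/2) ^ (m+1)) ^ (1/d)) with hηdef
  have hη0 : ∀ m, 0 < η m := fun m =>
    lt_min hρ0 (Real.rpow_pos_of_pos (by positivity) _)
  set s : ℕ → ℝ := fun m => max (a m) (η m) with hsdef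
  have hs0 : ∀ m, 0 < s m := fun m => lt_max_of_lt_right (hη0 m)
  have hsρ : ∀ m, s m ≤ ρ := fun m => max_le (haρ m) (min_le_left _ _)
  have hs1 : ∀ m, s m ≤ 1 := fun m => (hsρ m).trans hρ1
  set Kn : ℕ → ℕ := fun m => ⌈T / s m⌉₊ with hKdef
  set c : ℕ × ℕ → Set Z := fun mk =>
    if mk.2 ≤ Kn mk.1 then
      F '' (D ∩ (Set.Icc ((mk.2 : ℝ) * s mk.1) ((mk.2 + 1 : ℝ) * s mk.1) ×ˢ t mk.1))
    else ∅ with hcdef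
  have hcd : ∀ m k, EMetric.diam (c (m, k)) ≤ ENNReal.ofReal (C * s m) := by
    intro m k
    by_cases hk : k ≤ Kn m
    · rw [hcdef]; simp only [if_pos hk]
      refine EMetric.diam_le ?_
      rintro x ⟨p, ⟨hpD, hp1, hp2⟩, rfl⟩ y ⟨q, ⟨hqD, hq1, hq2⟩, rfl⟩
      rw [edist_dist]
      refine ENNReal.ofReal_le_ofReal ?_
      refine (hF p hpD q hqD).trans ?_
      refine mul_le_mul_of_nonneg_left (max_le ?_ ?_) hC0.le
      · simp only [Set.mem_Icc] at hp1 hq1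
        rw [abs_le]
        constructor <;> nlinarith [hp1.1, hp1.2, hq1.1, hq1.2, (hs0 m).le]
      · rw [dist_edist]
        calc (edist p.2 q.2).toReal ≤ (EMetric.diam (t m)).toReal :=
              ENNReal.toReal_mono (hdiam_ne m) (EMetric.edist_le_diam_of_mem hp2 hq2)
        _ ≤ s m := le_max_left _ _
    · rw [hcdef]; simp only [if_neg hk]
      simp [EMetric.diam]
  set e : ℕ ≃ ℕ × ℕ := (Denumerable.eqv (ℕ × ℕ)).symm with hedef
  set t' : ℕ → Set Z := fun i => c (e i) with ht'def
  -- the cover property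
  have hcover : F '' D ⊆ ⋃ i, t' i := by
    rintro x ⟨p, hpD, rfl⟩
    have hp1 : p.1 ∈ Set.Icc (0:ℝ) T := (hD hpD).1
    have hp2 : p.2 ∈ E := (hD hpD).2
    obtain ⟨m, hm⟩ := Set.mem_iUnion.1 (hcov hp2)
    set k : ℕ := ⌊p.1 / s m⌋₊ with hkdef
    have hk : k ≤ Kn m := by
      refine le_trans (Nat.floor_le_floor ?_) (Nat.floor_le_ceil _)
      exact (div_le_div_iff_of_pos_right (hs0 m)).2 hp1.2
    refine Set.mem_iUnion.2 ⟨e.symm (m, k), ?_⟩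
    have he : e (e.symm (m, k)) = (m, k) := e.apply_symm_apply _
    rw [ht'def]
    simp only [he]
    rw [hcdef]
    simp only [if_pos hk]
    refine ⟨p, ⟨hpD, ?_, hm⟩, rfl⟩
    have hdiv0 : 0 ≤ p.1 / s m := div_nonneg hp1.1 (hs0 m).le
    constructor
    · have := Nat.floor_le hdiv0
      rw [← hkdef] at this
      calc (k : ℝ) * s m ≤ p.1 / s m * s m :=
            mul_le_mul_of_nonneg_right this (hs0 m).le
      _ = p.1 := div_mul_cancel₀ _ (hs0 m).ne'
    · have := Nat.lt_floor_add_one (p.1 / s m)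
      rw [← hkdef] at this
      have h2 : p.1 < ((k : ℝ) + 1) * s m := by
        rw [← div_lt_iff₀ (hs0 m)]
        exact this
      exact h2.le
  -- diameters are at most r
  have hdiam : ∀ i, EMetric.diam (t' i) ≤ r := by
    intro i
    have h1 : EMetric.diam (t' i) ≤ ENNReal.ofReal (C * s (e i).1) := hcd (e i).1 (e i).2
    refine h1.trans ?_
    have h2 : ENNReal.ofReal (C * s (e i).1) ≤ ENNReal.ofReal ((min r 1).toReal) :=
      ENNReal.ofReal_le_ofReal ((mul_le_mul_of_nonneg_left (hsρ _) hC0.le).trans hρr)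
    refine h2.trans ?_
    rw [ENNReal.ofReal_toReal hmrt]
    exact min_le_left _ _
  -- choose this cover in the infimum
  refine iInf_le_of_le t' (iInf_le_of_le hcover (iInf_le_of_le hdiam ?_))
  -- bound the sum
  have hhalf : ENNReal.ofReal (1/2 : ℝ) = 2⁻¹ := by
    rw [one_div, ENNReal.ofReal_inv_of_pos two_pos, ENNReal.ofReal_ofNat]
  have hgeo : (∑' m : ℕ, (2⁻¹ : ℝ≥0∞) ^ (m + 1)) = 1 := by
    have hsucc : ∀ m : ℕ, (2⁻¹ : ℝ≥0∞) ^ (m + 1) = 2⁻¹ * 2⁻¹ ^ m := fun m => pow_succ' _ _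
    rw [tsum_congr hsucc, ENNReal.tsum_mul_left, ENNReal.tsum_geometric,
      ENNReal.one_sub_inv_two, inv_inv, ENNReal.inv_mul_cancel two_ne_zero ENNReal.ofNat_ne_top]
  have hterm : ∀ mk : ℕ × ℕ, EMetric.diam (c mk) ^ (d + 1)
      ≤ (if mk.2 ≤ Kn mk.1 then ENNReal.ofReal ((C * s mk.1) ^ (d + 1)) else 0) := by
    intro mk
    by_cases hk : mk.2 ≤ Kn mk.1
    · rw [if_pos hk]
      calc EMetric.diam (c mk) ^ (d + 1)
          ≤ ENNReal.ofReal (C * s mk.1) ^ (d + 1) :=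
            ENNReal.rpow_le_rpow (hcd mk.1 mk.2) hd1.le
        _ = ENNReal.ofReal ((C * s mk.1) ^ (d + 1)) :=
            ENNReal.ofReal_rpow_of_nonneg (by positivity) hd1.le
    · rw [if_neg hk]
      have hemp : c mk = ∅ := by rw [hcdef]; exact if_neg hk
      rw [hemp, EMetric.diam, Metric.ediam_empty, ENNReal.zero_rpow_of_pos hd1]
  have hinner : ∀ m, (∑' k : ℕ, (if k ≤ Kn m then ENNReal.ofReal ((C * s m) ^ (d + 1)) else 0))
      = ((Kn m : ℝ≥0∞) + 1) * ENNReal.ofReal ((C * s m) ^ (d + 1)) := by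
    intro m
    rw [tsum_eq_sum (s := Finset.range (Kn m + 1))
      (fun k hk => if_neg (by simp only [Finset.mem_range] at hk; omega))]
    rw [Finset.sum_congr rfl (fun k hk => if_pos
      (by simp only [Finset.mem_range] at hk; omega))]
    rw [Finset.sum_const, Finset.card_range, nsmul_eq_mul]
    push_cast
    ring
  have hstep5 : ∀ m, ((Kn m : ℝ≥0∞) + 1) * ENNReal.ofReal ((C * s m) ^ (d + 1))
      ≤ ENNReal.ofReal Q * ENNReal.ofReal (s m ^ d) := by
    intro m
    have hsd : (0:ℝ) < s m ^ d := Real.rpow_pos_of_pos (hs0 m) d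
    have hreal : ((Kn m : ℝ) + 1) * ((C * s m) ^ (d + 1)) ≤ Q * (s m ^ d) := by
      have h1 : (Kn m : ℝ) + 1 ≤ T / s m + 2 := by
        have := Nat.ceil_lt_add_one (div_nonneg hT (hs0 m).le)
        rw [hKdef] at *
        linarith
      have h2 : (C * s m) ^ (d + 1) = C ^ (d + 1) * (s m ^ d * s m) := by
        rw [Real.mul_rpow hC0.le (hs0 m).le, Real.rpow_add (hs0 m) d 1, Real.rpow_one]
      have h4 : (T / s m + 2) * (C ^ (d + 1) * (s m ^ d * s m))
          = C ^ (d + 1) * ((T + 2 * s m) * s m ^ d) := by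
        have hsne := (hs0 m).ne'
        field_simp
      calc ((Kn m : ℝ) + 1) * ((C * s m) ^ (d + 1))
          ≤ (T / s m + 2) * ((C * s m) ^ (d + 1)) := by
            apply mul_le_mul_of_nonneg_right h1 (by positivity)
        _ = C ^ (d + 1) * ((T + 2 * s m) * s m ^ d) := by rw [h2, h4]
        _ ≤ C ^ (d + 1) * ((T + 2) * s m ^ d) := by
            refine mul_le_mul_of_nonneg_left ?_ hCd.le
            refine mul_le_mul_of_nonneg_right ?_ hsd.le
            nlinarith [hs1 m]
        _ = Q * s m ^ d := by rw [hQdef]; ring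
    calc ((Kn m : ℝ≥0∞) + 1) * ENNReal.ofReal ((C * s m) ^ (d + 1))
        = ENNReal.ofReal ((Kn m : ℝ) + 1) * ENNReal.ofReal ((C * s m) ^ (d + 1)) := by
          rw [ENNReal.ofReal_add (by positivity) zero_le_one, ENNReal.ofReal_natCast,
            ENNReal.ofReal_one]
      _ = ENNReal.ofReal (((Kn m : ℝ) + 1) * ((C * s m) ^ (d + 1))) :=
          (ENNReal.ofReal_mul (by positivity)).symm
      _ ≤ ENNReal.ofReal (Q * (s m ^ d)) := ENNReal.ofReal_le_ofReal hreal
      _ = ENNReal.ofReal Q * ENNReal.ofReal (s m ^ d) := ENNReal.ofReal_mul hQ0.le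
  have h7a : (∑' m, ENNReal.ofReal (a m ^ d)) ≤ ENNReal.ofReal ε₂ := by
    have heq : ∀ m, ENNReal.ofReal (a m ^ d) = EMetric.diam (t m) ^ d := by
      intro m
      rw [← ENNReal.ofReal_rpow_of_nonneg (ha0 m) hd.le, hadef,
        ENNReal.ofReal_toReal (hdiam_ne m)]
    rw [tsum_congr heq]
    exact hsum
  have h7b : (∑' m, ENNReal.ofReal (η m ^ d)) ≤ ENNReal.ofReal ε₂ := by
    have hbnd : ∀ m, ENNReal.ofReal (η m ^ d)
        ≤ ENNReal.ofReal ε₂ * (2⁻¹ : ℝ≥0∞) ^ (m + 1) := by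
      intro m
      have hb : η m ^ d ≤ ε₂ * (1/2) ^ (m + 1) := by
        have hX : (0:ℝ) ≤ ε₂ * (1/2) ^ (m + 1) := by positivity
        have h1 : η m ≤ (ε₂ * (1/2) ^ (m + 1)) ^ (1/d) := min_le_right _ _
        have h2 : η m ^ d ≤ ((ε₂ * (1/2) ^ (m + 1)) ^ (1/d)) ^ d :=
          Real.rpow_le_rpow (hη0 m).le h1 hd.le
        rwa [← Real.rpow_mul hX, one_div_mul_cancel hd.ne', Real.rpow_one] at h2
      calc ENNReal.ofReal (η m ^ d) ≤ ENNReal.ofReal (ε₂ * (1/2) ^ (m + 1)) :=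
            ENNReal.ofReal_le_ofReal hb
        _ = ENNReal.ofReal ε₂ * ENNReal.ofReal ((1/2 : ℝ) ^ (m + 1)) := by
            rw [ENNReal.ofReal_mul hε₂.le]
        _ = ENNReal.ofReal ε₂ * (2⁻¹ : ℝ≥0∞) ^ (m + 1) := by
            rw [ENNReal.ofReal_pow (by norm_num), hhalf]
    calc (∑' m, ENNReal.ofReal (η m ^ d))
        ≤ ∑' m : ℕ, ENNReal.ofReal ε₂ * (2⁻¹ : ℝ≥0∞) ^ (m + 1) := ENNReal.tsum_le_tsum hbnd
      _ = ENNReal.ofReal ε₂ * ∑' m : ℕ, (2⁻¹ : ℝ≥0∞) ^ (m + 1) := ENNReal.tsum_mul_left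
      _ = ENNReal.ofReal ε₂ := by rw [hgeo, mul_one]
  have hstep7 : (∑' m, ENNReal.ofReal (s m ^ d))
      ≤ ENNReal.ofReal ε₂ + ENNReal.ofReal ε₂ := by
    have hsplit : ∀ m, ENNReal.ofReal (s m ^ d)
        ≤ ENNReal.ofReal (a m ^ d) + ENNReal.ofReal (η m ^ d) := by
      intro m
      rcases max_choice (a m) (η m) with h | h
      · rw [hsdef]
        simp only [h]
        exact self_le_add_right _ _
      · rw [hsdef]
        simp only [h]
        exact le_add_self
    calc (∑' m, ENNReal.ofReal (s m ^ d))
        ≤ ∑' m, (ENNReal.ofReal (a m ^ d) + ENNReal.ofReal (η m ^ d)) :=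
          ENNReal.tsum_le_tsum hsplit
      _ = (∑' m, ENNReal.ofReal (a m ^ d)) + ∑' m, ENNReal.ofReal (η m ^ d) :=
          ENNReal.tsum_add
      _ ≤ ENNReal.ofReal ε₂ + ENNReal.ofReal ε₂ := add_le_add h7a h7b
  have hfinal : ENNReal.ofReal Q * (ENNReal.ofReal ε₂ + ENNReal.ofReal ε₂) ≤ (ε : ℝ≥0∞) := by
    rw [← ENNReal.ofReal_add hε₂.le hε₂.le, ← ENNReal.ofReal_mul hQ0.le]
    have hr1 : ε₂ + ε₂ = (ε : ℝ) / (Q + 1) := by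
      rw [hε₂def]
      field_simp
      ring
    have hr2 : Q * ((ε : ℝ) / (Q + 1)) ≤ ε := by
      have h1 : Q * ((ε : ℝ) / (Q + 1)) ≤ (Q + 1) * ((ε : ℝ) / (Q + 1)) := by
        apply mul_le_mul_of_nonneg_right (by linarith) (by positivity)
      have h2 : (Q + 1) * ((ε : ℝ) / (Q + 1)) = ε := mul_div_cancel₀ _ (by positivity)
      linarith
    calc ENNReal.ofReal (Q * (ε₂ + ε₂)) ≤ ENNReal.ofReal ε := by
          rw [hr1]; exact ENNReal.ofReal_le_ofReal hr2
      _ = (ε : ℝ≥0∞) := ENNReal.ofReal_coe_nnreal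
  calc (∑' i, ⨆ _ : (t' i).Nonempty, EMetric.diam (t' i) ^ (d + 1))
      ≤ ∑' i, EMetric.diam (t' i) ^ (d + 1) :=
        ENNReal.tsum_le_tsum fun i => iSup_le fun _ => le_rfl
    _ = ∑' mk : ℕ × ℕ, EMetric.diam (c mk) ^ (d + 1) := by
        rw [ht'def]
        exact e.tsum_eq fun mk => EMetric.diam (c mk) ^ (d + 1)
    _ ≤ ∑' mk : ℕ × ℕ, (if mk.2 ≤ Kn mk.1 then
          ENNReal.ofReal ((C * s mk.1) ^ (d + 1)) else 0) := ENNReal.tsum_le_tsum hterm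
    _ = ∑' m, ∑' k, (if k ≤ Kn m then ENNReal.ofReal ((C * s m) ^ (d + 1)) else 0) :=
        ENNReal.tsum_prod (f := fun m k => if k ≤ Kn m then
          ENNReal.ofReal ((C * s m) ^ (d + 1)) else 0)
    _ = ∑' m, ((Kn m : ℝ≥0∞) + 1) * ENNReal.ofReal ((C * s m) ^ (d + 1)) :=
        tsum_congr hinner
    _ ≤ ∑' m, ENNReal.ofReal Q * ENNReal.ofReal (s m ^ d) := ENNReal.tsum_le_tsum hstep5
    _ = ENNReal.ofReal Q * ∑' m, ENNReal.ofReal (s m ^ d) := ENNReal.tsum_mul_left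
    _ ≤ ENNReal.ofReal Q * (ENNReal.ofReal ε₂ + ENNReal.ofReal ε₂) :=
        mul_le_mul_right hstep7 _
    _ ≤ (ε : ℝ≥0∞) := hfinal


/-- The `δ`-local basin of attraction of a compact invariant set `X` of the flow `φ`:
points whose forward orbit stays within distance `δ` of `X` and is attracted to `X`. -/
def deltaLocalBasin {N : ℕ}
    (φ : ℝ → EuclideanSpace ℝ (Fin N) → EuclideanSpace ℝ (Fin N))
    (X : Set (EuclideanSpace ℝ (Fin N))) (δ : ℝ) : Set (EuclideanSpace ℝ (Fin N)) :=
  {x | (∀ τ : ℝ, 0 ≤ τ → Metric.infDist (φ τ x) X < δ) ∧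
    Filter.Tendsto (fun τ : ℝ => Metric.infDist (φ τ x) X) Filter.atTop (nhds 0)}

set_option maxHeartbeats 1000000 in
/-- Let `f` be a `C¹` vector field on `ℝⁿ` generating a complete flow `φ`,
`X` a compact invariant set, `δ > 0`, and `H = {x | ℓ x = c}` an affine hyperplane such that
every point of the `δ`-local basin of attraction `B_δ(X)` reaches `H` in finite forward time.
If `B_δ(X)` has positive `n`-dimensional Lebesgue measure, then `H ∩ B_δ(X)` has positive
`(n−1)`-dimensional measure (Hausdorff measure of dimension `n − 1`, i.e. Lebesgue measure
computed in `H`). -/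
theorem basin_slice_positive_measure
    (N : ℕ)
    (f : EuclideanSpace ℝ (Fin N) → EuclideanSpace ℝ (Fin N))
    (hf : ContDiff ℝ 1 f)
    (φ : ℝ → EuclideanSpace ℝ (Fin N) → EuclideanSpace ℝ (Fin N))
    (hφ0 : ∀ x, φ 0 x = x)
    (hφadd : ∀ (s t : ℝ) (x), φ (s + t) x = φ s (φ t x))
    (hφ' : ∀ (x) (τ : ℝ), HasDerivAt (fun t => φ t x) (f (φ τ x)) τ)
    (X : Set (EuclideanSpace ℝ (Fin N)))
    (hXc : IsCompact X)
    (hXinv : ∀ (τ : ℝ) (x), x ∈ X → φ τ x ∈ X)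
    (δ : ℝ) (hδ : 0 < δ)
    (ℓ : EuclideanSpace ℝ (Fin N) →L[ℝ] ℝ) (hℓ : ℓ ≠ 0) (c : ℝ)
    (hreach : ∀ x ∈ deltaLocalBasin φ X δ, ∃ τ : ℝ, 0 ≤ τ ∧ ℓ (φ τ x) = c)
    (hpos : 0 < volume (deltaLocalBasin φ X δ)) :
    0 < Measure.hausdorffMeasure ((N : ℝ) - 1)
        ({x : EuclideanSpace ℝ (Fin N) | ℓ x = c} ∩ deltaLocalBasin φ X δ) := by
  classical
  set B := deltaLocalBasin φ X δ with hBdef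
  set Hs := {x : EuclideanSpace ℝ (Fin N) | ℓ x = c} with hHdef
  -- N = 0 is impossible since ℓ ≠ 0
  rcases Nat.eq_zero_or_pos N with hN0 | hN1
  · exfalso
    apply hℓ
    subst hN0
    haveI : Subsingleton (EuclideanSpace ℝ (Fin 0)) :=
      ⟨fun a b => PiLp.ext fun i => Fin.elim0 i⟩
    ext x
    rw [Subsingleton.elim x 0, map_zero]
    rfl
  by_contra hcon
  have h0 : μH[(N:ℝ) - 1] (Hs ∩ B) = 0 := le_antisymm (not_lt.mp hcon) zero_le
  -- forward invariance of the basin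
  have hBinv : ∀ x ∈ B, ∀ τ : ℝ, 0 ≤ τ → φ τ x ∈ B := by
    intro x hx τ hτ
    obtain ⟨hx1, hx2⟩ := hx
    constructor
    · intro σ hσ
      rw [← hφadd]
      exact hx1 (σ + τ) (by linarith)
    · have hco : (fun σ : ℝ => Metric.infDist (φ σ (φ τ x)) X)
          = (fun s : ℝ => Metric.infDist (φ s x) X) ∘ (fun σ => σ + τ) := by
        funext σ
        simp only [Function.comp_apply, ← hφadd]
      rw [hco]
      exact hx2.comp (Filter.tendsto_atTop_add_const_right _ τ Filter.tendsto_id)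
  have hBne : B.Nonempty := by
    rcases Set.eq_empty_or_nonempty B with h | h
    · rw [h] at hpos; simp at hpos
    · exact h
  have hHBne : (Hs ∩ B).Nonempty := by
    obtain ⟨x, hx⟩ := hBne
    obtain ⟨τ, hτ0, hτc⟩ := hreach x hx
    exact ⟨φ τ x, hτc, hBinv x hx τ hτ0⟩
  -- N = 1 is impossible: `μH[0]` of a nonempty set is at least 1
  rcases eq_or_lt_of_le (Nat.succ_le_of_lt hN1) with hN1' | hN2
  · have hcast : (N:ℝ) - 1 = 0 := by rw [← hN1']; norm_num
    rw [hcast] at h0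
    have hge := Measure.one_le_hausdorffMeasure_zero_of_nonempty hHBne
    rw [h0] at hge
    exact (by norm_num : ¬((1:ℝ≥0∞) ≤ 0)) hge
  have hd : (0:ℝ) < (N:ℝ) - 1 := by
    have h2 : (2:ℝ) ≤ (N:ℝ) := by exact_mod_cast hN2
    linarith
  have hcont : ∀ y, Continuous fun t : ℝ => φ t y :=
    fun y => continuous_iff_continuousAt.2 fun t => (hφ' y t).continuousAt
  rcases Set.eq_empty_or_nonempty X with hXe | hXne
  · -- X empty: the basin is everything and `Hs` contains an isometric copy of ℝ^(N-1)
    have hBuniv : B = Set.univ := by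
      apply Set.eq_univ_of_forall
      intro x
      constructor
      · intro τ _
        rw [hXe, Metric.infDist_empty]
        exact hδ
      · rw [hXe]
        simp only [Metric.infDist_empty]
        exact tendsto_const_nhds
    obtain ⟨v, hv⟩ : ∃ v, ℓ v ≠ 0 := by
      by_contra h
      push_neg at h
      exact hℓ (ContinuousLinearMap.ext fun x => by simp [h x])
    set ℓ' : EuclideanSpace ℝ (Fin N) →ₗ[ℝ] ℝ := (ℓ : EuclideanSpace ℝ (Fin N) →ₗ[ℝ] ℝ)
      with hℓ'def
    have hsurj : Function.Surjective ℓ' := by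
      intro y
      refine ⟨(y / ℓ v) • v, ?_⟩
      show ℓ ((y / ℓ v) • v) = y
      rw [ℓ.map_smul, smul_eq_mul]
      field_simp
    have hrank : Module.finrank ℝ (LinearMap.ker ℓ') = N - 1 := by
      have h1 := LinearMap.finrank_range_add_finrank_ker ℓ'
      rw [LinearMap.range_eq_top.2 hsurj, finrank_top, Module.finrank_self,
        finrank_euclideanSpace_fin] at h1
      omega
    set bOB := (stdOrthonormalBasis ℝ (LinearMap.ker ℓ')).reindex (finCongr hrank) with hbdef
    set J := bOB.repr.symm with hJdef
    set x₀ : EuclideanSpace ℝ (Fin N) := (c / ℓ v) • v with hx₀def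
    have hx₀ : ℓ x₀ = c := by
      rw [hx₀def, ℓ.map_smul, smul_eq_mul]
      field_simp
    set ι : EuclideanSpace ℝ (Fin (N - 1)) → EuclideanSpace ℝ (Fin N) :=
      fun w => x₀ + ((J w : EuclideanSpace ℝ (Fin N))) with hιdef
    have hiso : Isometry ι := by
      refine Isometry.of_dist_eq fun w₁ w₂ => ?_
      rw [hιdef]
      simp only []
      rw [dist_eq_norm, add_sub_add_left_eq_sub]
      have hco : (↑(J w₁) - ↑(J w₂) : EuclideanSpace ℝ (Fin N)) = ↑(J w₁ - J w₂) := rfl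
      rw [hco]
      have hno : ‖(↑(J w₁ - J w₂) : EuclideanSpace ℝ (Fin N))‖ = ‖J w₁ - J w₂‖ := rfl
      rw [hno, ← map_sub, J.norm_map, ← dist_eq_norm]
    have hsub : Set.range ι ⊆ Hs ∩ B := by
      rintro _ ⟨w, rfl⟩
      refine ⟨?_, by rw [hBuniv]; trivial⟩
      show ℓ (x₀ + ↑(J w)) = c
      rw [map_add, hx₀]
      have hker0 : ℓ' (↑(J w)) = 0 := (J w).2
      have : ℓ (↑(J w)) = 0 := hker0
      rw [this, add_zero]
    apply hcon
    have h1 : μH[(N:ℝ) - 1] (ι '' Set.univ) ≤ μH[(N:ℝ) - 1] (Hs ∩ B) := by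
      refine measure_mono ?_
      rw [Set.image_univ]
      exact hsub
    rw [hiso.hausdorffMeasure_image (Or.inl (by linarith))] at h1
    refine lt_of_lt_of_le ?_ h1
    -- positivity of μH[(N-1)] of the whole (N-1)-dimensional space
    have hcard : ((Fintype.card (Fin (N - 1)) : ℝ)) = (N:ℝ) - 1 := by
      rw [Fintype.card_fin]
      push_cast [Nat.cast_sub hN1]
      ring
    rcases eq_or_ne (μH[(N:ℝ) - 1] (Set.univ : Set (EuclideanSpace ℝ (Fin (N - 1))))) 0
      with hz0 | hz0
    · exfalso
      have h2 := (PiLp.lipschitzWith_ofLp 2 (fun _ : Fin (N - 1) => ℝ)).hausdorffMeasure_image_le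
        (by linarith : (0:ℝ) ≤ (N:ℝ) - 1) (Set.univ : Set (EuclideanSpace ℝ (Fin (N - 1))))
      rw [hz0] at h2
      simp only [mul_zero, le_zero_iff] at h2
      have himg : (⇑(WithLp.equiv 2 (∀ _ : Fin (N - 1), ℝ)) ''
          (Set.univ : Set (EuclideanSpace ℝ (Fin (N - 1))))) = Set.univ := by
        rw [Set.image_univ]
        exact (WithLp.equiv 2 _).surjective.range_eq
      rw [(show WithLp.ofLp '' (Set.univ : Set (EuclideanSpace ℝ (Fin (N - 1)))) = Set.univ from himg)] at h2
      have h3 : volume (Set.univ : Set (∀ _ : Fin (N - 1), ℝ)) = 0 := by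
        rw [← MeasureTheory.hausdorffMeasure_pi_real, hcard]
        exact h2
      have h4 : (0:ℝ≥0∞) < volume (Set.univ : Set (∀ _ : Fin (N - 1), ℝ)) :=
        isOpen_univ.measure_pos volume Set.univ_nonempty
      rw [h3] at h4
      exact lt_irrefl _ h4
    · exact pos_iff_ne_zero.2 hz0
  · -- main case: X nonempty
    apply hcon
    exfalso
    -- absorbing compact convex set A
    obtain ⟨R₀, hR₀⟩ := hXc.isBounded.subset_closedBall 0
    set A := Metric.closedBall (0 : EuclideanSpace ℝ (Fin N)) (max R₀ 0 + δ) with hAdef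
    have hA_mem : ∀ y, Metric.infDist y X < δ → y ∈ A := by
      intro y hy
      obtain ⟨x, hxX, hxy⟩ := (Metric.infDist_lt_iff hXne).1 hy
      have h1 : dist x 0 ≤ R₀ := by
        have := hR₀ hxX
        rwa [Metric.mem_closedBall] at this
      rw [hAdef, Metric.mem_closedBall]
      calc dist y 0 ≤ dist y x + dist x 0 := dist_triangle _ _ _
        _ ≤ max R₀ 0 + δ := by
            have := le_max_left R₀ (0:ℝ)
            linarith [hxy.le]
    have hAcomp : IsCompact A := isCompact_closedBall _ _
    have hAconv : Convex ℝ A := convex_closedBall _ _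
    have horbit : ∀ x ∈ B, ∀ t : ℝ, 0 ≤ t → φ t x ∈ A :=
      fun x hx t ht => hA_mem _ (hx.1 t ht)
    obtain ⟨M₀, hM₀⟩ := hAcomp.exists_bound_of_continuousOn hf.continuous.continuousOn
    set M := max M₀ 0 with hMdef
    have hM : ∀ y ∈ A, ‖f y‖ ≤ M := fun y hy => (hM₀ y hy).trans (le_max_left _ _)
    have hM0 : (0:ℝ) ≤ M := le_max_right _ _
    obtain ⟨L₀, hL₀⟩ := hAcomp.exists_bound_of_continuousOn
      ((hf.continuous_fderiv one_ne_zero).continuousOn)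
    set K : ℝ≥0 := Real.toNNReal L₀ with hKdef
    have hfl : LipschitzOnWith K f A := by
      refine Convex.lipschitzOnWith_of_nnnorm_fderiv_le
        (fun x _ => (hf.differentiable one_ne_zero).differentiableAt) ?_ hAconv
      intro x hx
      rw [← NNReal.coe_le_coe, coe_nnnorm, Real.coe_toNNReal']
      exact le_max_of_le_left (hL₀ x hx)
    have hKnn : (0:ℝ) ≤ (K:ℝ) := K.2
    have hflneg : ∀ _t : ℝ, LipschitzOnWith K (fun x => -f x) A := by
      intro t x hx y hy
      simpa [edist_neg_neg] using hfl hx hy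
    have hderiv : ∀ (w : EuclideanSpace ℝ (Fin N)) (u : ℝ),
        HasDerivAt (fun v : ℝ => φ (-v) w) (-(f (φ (-u) w))) u := by
      intro w u
      have h1 := (hφ' w (-u)).scomp u (hasDerivAt_neg u)
      simpa [Function.comp_def] using h1
    -- Grönwall: backward flow does not expand distances too fast
    have grow : ∀ b : ℝ, 0 ≤ b → ∀ y z : EuclideanSpace ℝ (Fin N),
        (∀ u ∈ Set.Icc 0 b, φ (-u) y ∈ A) → (∀ u ∈ Set.Icc 0 b, φ (-u) z ∈ A) →
        dist (φ (-b) y) (φ (-b) z) ≤ dist y z * Real.exp (K * b) := by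
      intro b hb y z hyA hzA
      have hmain := dist_le_of_trajectories_ODE_of_mem
        (v := fun _ x => -f x) (s := fun _ => A) (K := K) (a := 0) (b := b)
        (f := fun u : ℝ => φ (-u) y) (g := fun u : ℝ => φ (-u) z)
        (fun t _ => hflneg t)
        (((hcont y).comp continuous_neg).continuousOn)
        (fun u _ => (hderiv y u).hasDerivWithinAt)
        (fun u hu => hyA u ⟨hu.1, hu.2.le⟩)
        (((hcont z).comp continuous_neg).continuousOn)
        (fun u _ => (hderiv z u).hasDerivWithinAt)
        (fun u hu => hzA u ⟨hu.1, hu.2.le⟩)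
        (show dist (φ (-(0:ℝ)) y) (φ (-(0:ℝ)) z) ≤ dist y z by
          rw [neg_zero, hφ0, hφ0])
        b ⟨hb, le_rfl⟩
      simpa using hmain
    -- time regularity of the backward flow
    have tstep : ∀ z : EuclideanSpace ℝ (Fin N), ∀ s₁ t₁ : ℝ, 0 ≤ s₁ → s₁ ≤ t₁ →
        (∀ u ∈ Set.Icc 0 t₁, φ (-u) z ∈ A) →
        dist (φ (-s₁) z) (φ (-t₁) z) ≤ M * (t₁ - s₁) := by
      intro z s₁ t₁ hs₁ hst hzA
      have hmem : ∀ u ∈ Set.Icc (-t₁) (-s₁), φ u z ∈ A := by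
        intro u hu
        have := hzA (-u) ⟨by linarith [hu.2], by linarith [hu.1]⟩
        rwa [neg_neg] at this
      have key := Convex.norm_image_sub_le_of_norm_hasDerivWithin_le
        (f := fun u : ℝ => φ u z) (f' := fun u : ℝ => f (φ u z)) (C := M)
        (s := Set.Icc (-t₁) (-s₁))
        (fun u hu => (hφ' z u).hasDerivWithinAt)
        (fun u hu => hM _ (hmem u hu))
        (convex_Icc _ _)
        (Set.mem_Icc.2 ⟨le_rfl, by linarith⟩)
        (Set.mem_Icc.2 ⟨by linarith, le_rfl⟩)
      rw [dist_eq_norm]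
      calc ‖φ (-s₁) z - φ (-t₁) z‖ ≤ M * ‖(-s₁) - (-t₁)‖ := key
        _ = M * (t₁ - s₁) := by
            rw [show (-s₁) - (-t₁) = t₁ - s₁ by ring, Real.norm_eq_abs,
              abs_of_nonneg (by linarith)]
    set Cn : ℕ → ℝ := fun n => Real.exp (K * n) + M with hCdef
    have hC1 : ∀ n, 1 ≤ Cn n := by
      intro n
      have h1 := Real.one_le_exp (by positivity : (0:ℝ) ≤ (K:ℝ) * n)
      rw [hCdef]
      simp only []
      linarith
    set Ψ : ℝ × EuclideanSpace ℝ (Fin N) → EuclideanSpace ℝ (Fin N) :=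
      fun p => φ (-p.1) p.2 with hΨdef
    set D : ℕ → Set (ℝ × EuclideanSpace ℝ (Fin N)) := fun n =>
      (Set.Icc (0:ℝ) (n:ℝ) ×ˢ (Hs ∩ B)) ∩
        {p | ∀ u ∈ Set.Icc 0 p.1, φ (-u) p.2 ∈ A} with hDdef
    have hkey : ∀ n : ℕ, ∀ p ∈ D n, ∀ q ∈ D n,
        dist (Ψ p) (Ψ q) ≤ Cn n * max |p.1 - q.1| (dist p.2 q.2) := by
      have aux : ∀ n : ℕ, ∀ p ∈ D n, ∀ q ∈ D n, p.1 ≤ q.1 →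
          dist (Ψ p) (Ψ q) ≤ Cn n * max |p.1 - q.1| (dist p.2 q.2) := by
        intro n p hp q hq hpq
        obtain ⟨⟨hp1, hp2⟩, hpA⟩ := hp
        obtain ⟨⟨hq1, hq2⟩, hqA⟩ := hq
        have h0p : (0:ℝ) ≤ p.1 := hp1.1
        have hqA' : ∀ u ∈ Set.Icc (0:ℝ) p.1, φ (-u) q.2 ∈ A := fun u hu =>
          hqA u ⟨hu.1, hu.2.trans hpq⟩
        have h1 := grow p.1 h0p p.2 q.2 hpA hqA'
        have h2 := tstep q.2 p.1 q.1 h0p hpq hqA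
        have habs : |p.1 - q.1| = q.1 - p.1 := by
          rw [abs_sub_comm]
          exact abs_of_nonneg (by linarith)
        have hexp : Real.exp (K * p.1) ≤ Real.exp (K * n) :=
          Real.exp_le_exp.2 (mul_le_mul_of_nonneg_left hp1.2 hKnn)
        have hexp1 : (1:ℝ) ≤ Real.exp (K * n) :=
          Real.one_le_exp (by positivity)
        have hmax1 : dist p.2 q.2 ≤ max |p.1 - q.1| (dist p.2 q.2) := le_max_right _ _
        have hmax2 : q.1 - p.1 ≤ max |p.1 - q.1| (dist p.2 q.2) := habs ▸ le_max_left _ _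
        have hmax0 : (0:ℝ) ≤ max |p.1 - q.1| (dist p.2 q.2) :=
          le_trans dist_nonneg hmax1
        calc dist (Ψ p) (Ψ q)
            ≤ dist (φ (-p.1) p.2) (φ (-p.1) q.2)
              + dist (φ (-p.1) q.2) (φ (-q.1) q.2) := dist_triangle _ _ _
          _ ≤ dist p.2 q.2 * Real.exp (K * p.1) + M * (q.1 - p.1) := add_le_add h1 h2
          _ ≤ Cn n * max |p.1 - q.1| (dist p.2 q.2) := by
              rw [hCdef]
              simp only []
              have e1 : dist p.2 q.2 * Real.exp (↑K * p.1)
                  ≤ max |p.1 - q.1| (dist p.2 q.2) * Real.exp (↑K * n) :=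
                mul_le_mul hmax1 hexp (Real.exp_pos _).le hmax0
              have e2 : M * (q.1 - p.1) ≤ M * max |p.1 - q.1| (dist p.2 q.2) :=
                mul_le_mul_of_nonneg_left hmax2 hM0
              nlinarith [e1, e2]
      intro n p hp q hq
      rcases le_total p.1 q.1 with h | h
      · exact aux n p hp q hq h
      · have hsym := aux n q hq p hp h
        rw [dist_comm (Ψ q) (Ψ p), dist_comm q.2 p.2, abs_sub_comm q.1 p.1] at hsym
        exact hsym
    have hcoverB : B ⊆ ⋃ n : ℕ, Ψ '' D n := by
      intro x hx
      obtain ⟨τ, hτ0, hτc⟩ := hreach x hx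
      refine Set.mem_iUnion.2 ⟨⌈τ⌉₊, ⟨(τ, φ τ x),
        ⟨⟨⟨hτ0, Nat.le_ceil τ⟩, hτc, hBinv x hx τ hτ0⟩, ?_⟩, ?_⟩⟩
      · intro u hu
        have hφu : φ (-u) (φ τ x) = φ (τ - u) x := by
          rw [← hφadd]
          congr 1
          ring
        rw [hφu]
        exact horbit x hx (τ - u) (by linarith [hu.2])
      · show φ (-τ) (φ τ x) = x
        rw [← hφadd, neg_add_cancel, hφ0]
    have hnull : ∀ n : ℕ, μH[(N:ℝ)] (Ψ '' D n) = 0 := by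
      intro n
      have hDsub : D n ⊆ Set.Icc (0:ℝ) (n:ℝ) ×ˢ (Hs ∩ B) := fun p hp => hp.1
      have h := aux_image_null hd h0 (T := (n:ℝ)) (Nat.cast_nonneg n) (hC1 n)
        (D := D n) hDsub (F := Ψ) (hkey n)
      have hexp : (N:ℝ) - 1 + 1 = (N:ℝ) := by ring
      rwa [hexp] at h
    have hBnullH : μH[(N:ℝ)] B = 0 :=
      measure_mono_null hcoverB (measure_iUnion_null hnull)
    -- transfer to Lebesgue measure and reach the contradiction
    set e := (MeasurableEquiv.toLp 2 (Fin N → ℝ)).symm with hedef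
    have h1 : volume B = volume (⇑e '' B) := by
      have hp := (EuclideanSpace.volume_preserving_symm_measurableEquiv_toLp
        (Fin N)).measure_preimage_equiv (⇑e '' B)
      rw [Set.preimage_image_eq B e.injective] at hp
      exact hp
    have h2 : μH[(N:ℝ)] (⇑e '' B) = 0 := by
      have hl : LipschitzWith 1 (⇑e) := by
        exact PiLp.lipschitzWith_ofLp 2 _
      have := hl.hausdorffMeasure_image_le (by positivity : (0:ℝ) ≤ (N:ℝ)) B
      rw [hBnullH] at this
      simpa using this
    have h3 : volume (⇑e '' B) = 0 := by
      rw [← MeasureTheory.hausdorffMeasure_pi_real (ι := Fin N)]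
      have hcard : ((Fintype.card (Fin N) : ℝ)) = (N:ℝ) := by
        rw [Fintype.card_fin]
      rw [hcard]
      exact h2
    rw [h1, h3] at hpos
    exact lt_irrefl _ hpos
end

section
/- With the basic transition matrices M_j = A_j B_j as in the context, set M := M_m ⋯ M₁, an n₁×n₁ real matrix. Then M maps each insignificant standard basis vector of ℝ^{n₁} to an insignificant standard basis vector; in particular the subspace V^{ins} spanned by the insignificant basis vectors is M-invariant, the restriction of M to V^{ins} permutes the insignificant basis vectors, and every eigenvalue of the restriction of M to V^{ins} has absolute value 1. -/
open Matrix

/-- The matrix `B_j`: its first column is `(b_{j,1}, …, b_{j,n_{j+1}})`, its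
`(c_j + k, 1 + k)` entry (in `1`-based indexing) equals `1` for `k = 1, …, n_j − 1`,
and all remaining entries vanish.  Here the data `b` is given as an untyped double
sequence; only the entries `b j i` with `i < n (j+1)` are used. -/
noncomputable def Bmat (n c : ℕ → ℕ) (b : ℕ → ℕ → ℝ) (j : ℕ) :
    Matrix (Fin (n (j + 1))) (Fin (n j)) ℝ :=
  Matrix.of fun i k =>
    if (k : ℕ) = 0 then b j (i : ℕ)
    else if (i : ℕ) + 1 = c j + (k : ℕ) then 1 else 0

/-- The matrix with entries `A j i k` (the permutation matrix `A_j`, given as an untyped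
double sequence). -/
def Amat (n : ℕ → ℕ) (A : ℕ → ℕ → ℕ → ℝ) (j : ℕ) :
    Matrix (Fin (n (j + 1))) (Fin (n (j + 1))) ℝ :=
  Matrix.of fun i k => A j (i : ℕ) (k : ℕ)

/-- The basic transition matrix `M_j = A_j B_j`. -/
noncomputable def Mmat (n c : ℕ → ℕ) (b : ℕ → ℕ → ℝ) (A : ℕ → ℕ → ℕ → ℝ) (j : ℕ) :
    Matrix (Fin (n (j + 1))) (Fin (n j)) ℝ :=
  Amat n A j * Bmat n c b j

/-- The product `M_{l+k-1} ⋯ M_{l+1} M_l` acting on vectors: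
`iterVec n c b A l k v = M_{l+k-1} ⋯ M_l v`. -/
noncomputable def iterVec (n c : ℕ → ℕ) (b : ℕ → ℕ → ℝ) (A : ℕ → ℕ → ℕ → ℝ) (l : ℕ) :
    (k : ℕ) → (Fin (n l) → ℝ) → (Fin (n (l + k)) → ℝ)
  | 0, v => v
  | k + 1, v => (Mmat n c b A (l + k)).mulVec (iterVec n c b A l k v)

/-- An index `l` (in `0`-based indexing: `1 ≤ l ≤ n_j − 1`, corresponding to the indices
`2, …, n_j` in `1`-based indexing) is insignificant for the collection started at `j` if for
every `k ≥ 1` the vector `M_{j+k-1} ⋯ M_j e_l` is a standard basis vector `e_i` with `i ≥ 2`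
(`1`-based), i.e. `i ≥ 1` (`0`-based). -/
def Insignif (n c : ℕ → ℕ) (b : ℕ → ℕ → ℝ) (A : ℕ → ℕ → ℕ → ℝ) (j : ℕ)
    (l : Fin (n j)) : Prop :=
  1 ≤ (l : ℕ) ∧ ∀ k : ℕ, 1 ≤ k → ∃ i : Fin (n (j + k)),
    1 ≤ (i : ℕ) ∧ iterVec n c b A j k (Pi.single l 1) = Pi.single i 1

/-- The set of insignificant standard basis vectors of `ℝ^{n_j}` (for the collection started
at `j`); its span is `V^{ins}_j`. -/
def insigSet (n c : ℕ → ℕ) (b : ℕ → ℕ → ℝ) (A : ℕ → ℕ → ℕ → ℝ) (j : ℕ) :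
    Set (Fin (n j) → ℝ) :=
  {v | ∃ l : Fin (n j), Insignif n c b A j l ∧ v = Pi.single l 1}

/-- The set of insignificant standard basis vectors inside `ℂ^{n_j}`; its span is the
complexification of `V^{ins}_j`. -/
def insigSetC (n c : ℕ → ℕ) (b : ℕ → ℕ → ℝ) (A : ℕ → ℕ → ℕ → ℝ) (j : ℕ) :
    Set (Fin (n j) → ℂ) :=
  {v | ∃ l : Fin (n j), Insignif n c b A j l ∧ v = Pi.single l 1}

/-- The square transition matrix `M^{(j)} = M_{j+m-1} ⋯ M_j`
(`= M_{j-1} ⋯ M_1 M_m ⋯ M_j` by cyclic periodicity of the data), an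
`n_j × n_j` matrix (using `n (j + m) = n j`). -/
noncomputable def cycMat (n c : ℕ → ℕ) (b : ℕ → ℕ → ℝ) (A : ℕ → ℕ → ℕ → ℝ)
    (m j : ℕ) (h : n (j + m) = n j) : Matrix (Fin (n j)) (Fin (n j)) ℝ :=
  Matrix.of fun i k => iterVec n c b A j m (Pi.single k 1) (Fin.cast h.symm i)

/-- `μ ∈ ℂ` is a significant eigenvalue of the transition matrix `M^{(j)}` if it admits an
eigenvector (over `ℂ`) not lying in the complexification of `V^{ins}_j`. -/
def SigEigenvalue (n c : ℕ → ℕ) (b : ℕ → ℕ → ℝ) (A : ℕ → ℕ → ℕ → ℝ)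
    (m j : ℕ) (h : n (j + m) = n j) (μ : ℂ) : Prop :=
  ∃ v : Fin (n j) → ℂ, v ≠ 0 ∧
    ((cycMat n c b A m j h).map (fun x : ℝ => (x : ℂ))).mulVec v = μ • v ∧
    v ∉ Submodule.span ℂ (insigSetC n c b A j)


section Aux

/-- index injectivity of `Pi.single · (1:K)` -/
theorem single_one_inj {K : Type*} [Field K] {N : ℕ} {a a' : Fin N}
    (h : (Pi.single a 1 : Fin N → K) = Pi.single a' 1) : a = a' := by
  by_contra hne
  have := congrFun h a
  rw [Pi.single_eq_same, Pi.single_apply, if_neg hne] at this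
  exact one_ne_zero this

variable {n c : ℕ → ℕ} {b : ℕ → ℕ → ℝ} {A : ℕ → ℕ → ℕ → ℝ}

/-- The step function on indices. -/
def stepFn (hn : ∀ j, 1 ≤ n j) (hnc : ∀ j, n (j + 1) + 1 = n j + c j)
    (σ : ∀ j, Equiv.Perm (Fin (n (j + 1)))) (j : ℕ) (l : Fin (n j)) : Fin (n (j + 1)) :=
  σ j ⟨c j + (l : ℕ) - 1, by
    have h1 := hnc j; have h2 := hn (j + 1); have h3 := l.isLt; omega⟩

/-- The trajectory of an index. -/
def trajFn (hn : ∀ j, 1 ≤ n j) (hnc : ∀ j, n (j + 1) + 1 = n j + c j)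
    (σ : ∀ j, Equiv.Perm (Fin (n (j + 1)))) (j : ℕ) (l : Fin (n j)) :
    (k : ℕ) → Fin (n (j + k))
  | 0 => l
  | k + 1 => stepFn hn hnc σ (j + k) (trajFn hn hnc σ j l k)

variable {hn : ∀ j, 1 ≤ n j} {hnc : ∀ j, n (j + 1) + 1 = n j + c j}
variable {σ : ∀ j, Equiv.Perm (Fin (n (j + 1)))}

theorem stepFn_val_congr {j j' : ℕ} (h : j = j') {l : Fin (n j)} {l' : Fin (n j')}
    (hl : (l : ℕ) = (l' : ℕ)) :
    ((stepFn hn hnc σ j l : Fin (n (j+1))) : ℕ) = (stepFn hn hnc σ j' l' : ℕ) := by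
  subst h
  have : l = l' := Fin.ext hl
  subst this; rfl

theorem stepFn_inj {j : ℕ} {l l' : Fin (n j)} (h1 : 1 ≤ (l : ℕ)) (h2 : 1 ≤ (l' : ℕ))
    (h : stepFn hn hnc σ j l = stepFn hn hnc σ j l') : l = l' := by
  unfold stepFn at h
  have := (σ j).injective h
  have hv : c j + (l : ℕ) - 1 = c j + (l' : ℕ) - 1 := congrArg Fin.val this
  exact Fin.ext (by omega)

theorem Bmat_mulVec_single (hn : ∀ j, 1 ≤ n j) (hnc : ∀ j, n (j + 1) + 1 = n j + c j)
    {j : ℕ} (l : Fin (n j)) (h1 : 1 ≤ (l : ℕ)) :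
    (Bmat n c b j).mulVec (Pi.single l 1) =
      Pi.single (⟨c j + (l : ℕ) - 1, by
        have := hnc j; have := hn (j + 1); have := l.isLt; omega⟩ : Fin (n (j + 1))) 1 := by
  funext i
  rw [Matrix.mulVec_single]
  show (Bmat n c b j i l) * 1 = _
  rw [mul_one, Pi.single_apply]
  show (if (l : ℕ) = 0 then b j (i : ℕ)
    else if (i : ℕ) + 1 = c j + (l : ℕ) then 1 else 0) = _
  rw [if_neg (by omega)]
  congr 1
  rw [Fin.ext_iff]
  show ((i : ℕ) + 1 = c j + (l : ℕ)) = ((i : ℕ) = c j + (l : ℕ) - 1)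
  simp only [eq_iff_iff]
  omega

theorem Amat_mulVec_single (hA : ∀ j (i k : Fin (n (j + 1))),
      A j (i : ℕ) (k : ℕ) = if i = σ j k then (1 : ℝ) else 0)
    {j : ℕ} (t : Fin (n (j + 1))) :
    (Amat n A j).mulVec (Pi.single t 1) = Pi.single (σ j t) 1 := by
  funext i
  rw [Matrix.mulVec_single]
  show A j (i : ℕ) (t : ℕ) * 1 = _
  rw [mul_one, hA j i t, Pi.single_apply]

theorem Mmat_mulVec_single (hA : ∀ j (i k : Fin (n (j + 1))),
      A j (i : ℕ) (k : ℕ) = if i = σ j k then (1 : ℝ) else 0)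
    {j : ℕ} (l : Fin (n j)) (h1 : 1 ≤ (l : ℕ)) :
    (Mmat n c b A j).mulVec (Pi.single l 1) = Pi.single (stepFn hn hnc σ j l) 1 := by
  rw [Mmat, ← Matrix.mulVec_mulVec, Bmat_mulVec_single hn hnc l h1,
    Amat_mulVec_single hA]
  rfl

theorem iterVec_single (hA : ∀ j (i k : Fin (n (j + 1))),
      A j (i : ℕ) (k : ℕ) = if i = σ j k then (1 : ℝ) else 0)
    {j : ℕ} (l : Fin (n j)) (k : ℕ)
    (hk : ∀ k' < k, 1 ≤ ((trajFn hn hnc σ j l k' : Fin (n (j + k'))) : ℕ)) :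
    iterVec n c b A j k (Pi.single l 1) = Pi.single (trajFn hn hnc σ j l k) 1 := by
  induction k with
  | zero => rfl
  | succ k ih =>
    show (Mmat n c b A (j + k)).mulVec (iterVec n c b A j k (Pi.single l 1)) = _
    rw [ih (fun k' hk' => hk k' (by omega)),
      Mmat_mulVec_single hA _ (hk k (by omega))]
    rfl

theorem insignif_iff (hA : ∀ j (i k : Fin (n (j + 1))),
      A j (i : ℕ) (k : ℕ) = if i = σ j k then (1 : ℝ) else 0)
    {j : ℕ} (l : Fin (n j)) :
    Insignif n c b A j l ↔ ∀ k, 1 ≤ ((trajFn hn hnc σ j l k : Fin (n (j + k))) : ℕ) := by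
  constructor
  · intro hins
    intro k
    induction k using Nat.strong_induction_on with
    | _ k ih =>
      match k with
      | 0 => exact hins.1
      | k + 1 =>
        obtain ⟨i, hi1, hi2⟩ := hins.2 (k + 1) (by omega)
        rw [iterVec_single hA l (k + 1) (fun k' hk' => ih k' hk')] at hi2
        have := congrArg Fin.val (single_one_inj hi2.symm)
        omega
  · intro h
    refine ⟨h 0, fun k hk => ⟨trajFn hn hnc σ j l k, h k, ?_⟩⟩
    exact iterVec_single hA l k (fun k' _ => h k')

theorem trajFn_inj (hA : ∀ j (i k : Fin (n (j + 1))),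
      A j (i : ℕ) (k : ℕ) = if i = σ j k then (1 : ℝ) else 0)
    {j : ℕ} {l l' : Fin (n j)}
    (h1 : ∀ k, 1 ≤ ((trajFn hn hnc σ j l k : Fin (n (j + k))) : ℕ))
    (h2 : ∀ k, 1 ≤ ((trajFn hn hnc σ j l' k : Fin (n (j + k))) : ℕ))
    (k : ℕ) (h : trajFn hn hnc σ j l k = trajFn hn hnc σ j l' k) : l = l' := by
  induction k with
  | zero => exact h
  | succ k ih =>
    exact ih (stepFn_inj (h1 k) (h2 k) h)

section Periodic

variable {m : ℕ}

theorem sigma_per (hnper : ∀ j, n (j + m) = n j) (hAper : ∀ j, A (j + m) = A j)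
    (hA : ∀ j (i k : Fin (n (j + 1))),
      A j (i : ℕ) (k : ℕ) = if i = σ j k then (1 : ℝ) else 0)
    (j : ℕ) (k : Fin (n (j + 1))) (k' : Fin (n (j + m + 1)))
    (hk : (k' : ℕ) = (k : ℕ)) : ((σ (j + m) k' : Fin (n (j + m + 1))) : ℕ) = (σ j k : ℕ) := by
  have h1 : A (j + m) ((σ (j + m) k' : Fin (n (j + m + 1))) : ℕ) (k' : ℕ) = 1 := by
    rw [hA (j + m) (σ (j + m) k') k', if_pos rfl]
  rw [hAper j, hk] at h1
  have hlt : ((σ (j + m) k' : Fin (n (j + m + 1))) : ℕ) < n (j + 1) := by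
    have h3 := (σ (j + m) k').isLt
    have h4 : n (j + 1 + m) = n (j + 1) := hnper (j + 1)
    have h5 : j + m + 1 = j + 1 + m := by omega
    have h6 : n (j + m + 1) = n (j + 1 + m) := congrArg n h5
    omega
  set i0 : Fin (n (j + 1)) := ⟨((σ (j + m) k' : Fin (n (j + m + 1))) : ℕ), hlt⟩ with hi0
  have h2 := hA j i0 k
  rw [h1] at h2
  by_cases hcase : i0 = σ j k
  · exact congrArg Fin.val hcase
  · rw [if_neg hcase] at h2; exact absurd h2 one_ne_zero

theorem stepFn_per (hnper : ∀ j, n (j + m) = n j) (hcper : ∀ j, c (j + m) = c j)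
    (hAper : ∀ j, A (j + m) = A j)
    (hA : ∀ j (i k : Fin (n (j + 1))),
      A j (i : ℕ) (k : ℕ) = if i = σ j k then (1 : ℝ) else 0)
    (j : ℕ) (l : Fin (n j)) (l' : Fin (n (j + m))) (hl : (l' : ℕ) = (l : ℕ)) :
    ((stepFn hn hnc σ (j + m) l' : Fin (n (j + m + 1))) : ℕ) =
      (stepFn hn hnc σ j l : ℕ) := by
  unfold stepFn
  exact sigma_per hnper hAper hA j _ _ (by simp [hcper j, hl])

theorem trajFn_per (hnper : ∀ j, n (j + m) = n j) (hcper : ∀ j, c (j + m) = c j)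
    (hAper : ∀ j, A (j + m) = A j)
    (hA : ∀ j (i k : Fin (n (j + 1))),
      A j (i : ℕ) (k : ℕ) = if i = σ j k then (1 : ℝ) else 0)
    (j : ℕ) (l : Fin (n j)) (l' : Fin (n (j + m))) (hl : (l' : ℕ) = (l : ℕ)) (k : ℕ) :
    ((trajFn hn hnc σ (j + m) l' k : Fin (n (j + m + k))) : ℕ) =
      (trajFn hn hnc σ j l k : ℕ) := by
  induction k with
  | zero => exact hl
  | succ k ih =>
    show ((stepFn hn hnc σ (j + m + k) _ : Fin (n (j + m + k + 1))) : ℕ) =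
      ((stepFn hn hnc σ (j + k) _ : Fin (n (j + k + 1))) : ℕ)
    have harith : j + m + k = (j + k) + m := by omega
    have hlt : ((trajFn hn hnc σ (j + m) l' k : Fin (n (j + m + k))) : ℕ) < n (j + k + m) := by
      have := (trajFn hn hnc σ (j + m) l' k).isLt
      have h6 : n (j + m + k) = n (j + k + m) := congrArg n harith
      omega
    set x : Fin (n (j + k + m)) := ⟨_, hlt⟩ with hx
    have h1 : ((stepFn hn hnc σ (j + m + k) (trajFn hn hnc σ (j + m) l' k) :
        Fin (n (j + m + k + 1))) : ℕ) = (stepFn hn hnc σ ((j + k) + m) x : ℕ) :=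
      stepFn_val_congr harith rfl
    rw [h1]
    exact stepFn_per hnper hcper hAper hA (j + k) (trajFn hn hnc σ j l k) x ih

end Periodic

theorem trajFn_comp (j p : ℕ) (l : Fin (n j)) (l' : Fin (n (j + p)))
    (hl : (l' : ℕ) = (trajFn hn hnc σ j l p : ℕ)) (k : ℕ) :
    ((trajFn hn hnc σ (j + p) l' k : Fin (n (j + p + k))) : ℕ) =
      (trajFn hn hnc σ j l (p + k) : ℕ) := by
  induction k with
  | zero => exact hl
  | succ k ih =>
    show ((stepFn hn hnc σ (j + p + k) _ : Fin (n (j + p + k + 1))) : ℕ) =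
      ((stepFn hn hnc σ (j + (p + k)) _ : Fin (n (j + (p + k) + 1))) : ℕ)
    exact stepFn_val_congr (by omega) ih

theorem cycMat_mulVec_single (hA : ∀ j (i k : Fin (n (j + 1))),
      A j (i : ℕ) (k : ℕ) = if i = σ j k then (1 : ℝ) else 0)
    {m j : ℕ} (h : n (j + m) = n j) (l : Fin (n j))
    (hl : ∀ k, 1 ≤ ((trajFn hn hnc σ j l k : Fin (n (j + k))) : ℕ)) :
    (cycMat n c b A m j h).mulVec (Pi.single l 1) =
      Pi.single (Fin.cast h (trajFn hn hnc σ j l m)) 1 := by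
  funext i
  rw [Matrix.mulVec_single]
  show cycMat n c b A m j h i l * 1 = _
  rw [mul_one]
  show iterVec n c b A j m (Pi.single l 1) (Fin.cast h.symm i) = _
  rw [iterVec_single hA l m (fun k' _ => hl k'), Pi.single_apply, Pi.single_apply]
  congr 1
  rw [Fin.ext_iff, Fin.ext_iff]
  simp only [Fin.coe_cast, eq_iff_iff]

end Aux


/-- (Theorem 3 in [Podvigina 2012], adapted to type Y cycles.)
With the basic transition matrices `M_j = A_j B_j` (data periodic with period `m`), the
transition matrix `M = M_m ⋯ M_1` maps each insignificant standard basis vector to an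
insignificant standard basis vector; in particular the subspace `V^{ins}` spanned by the
insignificant basis vectors is `M`-invariant, the restriction of `M` to `V^{ins}` permutes
the insignificant basis vectors, and every eigenvalue of the restriction of `M` to
`V^{ins}` has absolute value `1`. -/
theorem insignificant_subspace_invariant
    (m : ℕ) (hm : 1 ≤ m)
    (n c : ℕ → ℕ) (hn : ∀ j, 1 ≤ n j)
    (hnc : ∀ j, n (j + 1) + 1 = n j + c j)
    (hnper : ∀ j, n (j + m) = n j) (hcper : ∀ j, c (j + m) = c j)
    (b : ℕ → ℕ → ℝ) (hbper : ∀ j, b (j + m) = b j)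
    (A : ℕ → ℕ → ℕ → ℝ) (hAper : ∀ j, A (j + m) = A j)
    (hAperm : ∀ j : ℕ, ∃ σ : Equiv.Perm (Fin (n (j + 1))),
      ∀ i k : Fin (n (j + 1)), A j (i : ℕ) (k : ℕ) = if i = σ k then (1 : ℝ) else 0) :
    (∀ l : Fin (n 1), Insignif n c b A 1 l →
      ∃ l' : Fin (n 1), Insignif n c b A 1 l' ∧
        (cycMat n c b A m 1 (hnper 1)).mulVec (Pi.single l 1) = Pi.single l' 1) ∧
    (∀ v ∈ Submodule.span ℝ (insigSet n c b A 1),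
      (cycMat n c b A m 1 (hnper 1)).mulVec v ∈ Submodule.span ℝ (insigSet n c b A 1)) ∧
    (∃ σ : {l : Fin (n 1) // Insignif n c b A 1 l} ≃ {l : Fin (n 1) // Insignif n c b A 1 l},
      ∀ l : {l : Fin (n 1) // Insignif n c b A 1 l},
        (cycMat n c b A m 1 (hnper 1)).mulVec (Pi.single l.1 1) = Pi.single (σ l).1 1) ∧
    (∀ (μ : ℂ) (v : Fin (n 1) → ℂ),
      v ∈ Submodule.span ℂ (insigSetC n c b A 1) → v ≠ 0 →
      ((cycMat n c b A m 1 (hnper 1)).map (fun x : ℝ => (x : ℂ))).mulVec v = μ • v →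
      ‖μ‖ = 1) := by
  obtain ⟨σ, hA⟩ : ∃ σ : ∀ j, Equiv.Perm (Fin (n (j + 1))),
      ∀ j (i k : Fin (n (j + 1))), A j (i : ℕ) (k : ℕ) = if i = σ j k then (1 : ℝ) else 0 :=
    ⟨fun j => (hAperm j).choose, fun j => (hAperm j).choose_spec⟩
  -- the key step: images of insignificant indices
  have key : ∀ l : Fin (n 1), Insignif n c b A 1 l →
      Insignif n c b A 1 (Fin.cast (hnper 1) (trajFn hn hnc σ 1 l m)) ∧
      (cycMat n c b A m 1 (hnper 1)).mulVec (Pi.single l 1) =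
        Pi.single (Fin.cast (hnper 1) (trajFn hn hnc σ 1 l m)) 1 := by
    intro l hl
    have htraj : ∀ k, 1 ≤ ((trajFn hn hnc σ 1 l k : Fin (n (1 + k))) : ℕ) :=
      (insignif_iff hA l).1 hl
    constructor
    · rw [insignif_iff (hn := hn) (hnc := hnc) hA]
      intro k
      have e1 : ((trajFn hn hnc σ (1 + m) (trajFn hn hnc σ 1 l m) k :
          Fin (n (1 + m + k))) : ℕ) =
          ((trajFn hn hnc σ 1 (Fin.cast (hnper 1) (trajFn hn hnc σ 1 l m)) k :
            Fin (n (1 + k))) : ℕ) :=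
        trajFn_per hnper hcper hAper hA 1 _ _ rfl k
      have e2 : ((trajFn hn hnc σ (1 + m) (trajFn hn hnc σ 1 l m) k :
          Fin (n (1 + m + k))) : ℕ) =
          ((trajFn hn hnc σ 1 l (m + k) : Fin (n (1 + (m + k)))) : ℕ) :=
        trajFn_comp 1 m l _ rfl k
      have e3 := htraj (m + k)
      omega
    · exact cycMat_mulVec_single hA (hnper 1) l htraj
  -- injectivity of the induced map on insignificant indices
  set nxt : Fin (n 1) → Fin (n 1) :=
    fun l => Fin.cast (hnper 1) (trajFn hn hnc σ 1 l m) with hnxt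
  have hnxtinj : ∀ l1 l2 : Fin (n 1), Insignif n c b A 1 l1 → Insignif n c b A 1 l2 →
      nxt l1 = nxt l2 → l1 = l2 := by
    intro l1 l2 h1 h2 h12
    have h12' : ((nxt l1 : Fin (n 1)) : ℕ) = ((nxt l2 : Fin (n 1)) : ℕ) :=
      congrArg Fin.val h12
    have h3 : trajFn hn hnc σ 1 l1 m = trajFn hn hnc σ 1 l2 m := Fin.ext h12'
    exact trajFn_inj hA ((insignif_iff hA _).1 h1) ((insignif_iff hA _).1 h2) m h3
  set K := {l : Fin (n 1) // Insignif n c b A 1 l} with hK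
  let f : K → K := fun l => ⟨nxt l.1, (key l.1 l.2).1⟩
  have hfinj : Function.Injective f := by
    intro l1 l2 hf
    exact Subtype.ext (hnxtinj l1.1 l2.1 l1.2 l2.2 (congrArg Subtype.val hf))
  have hfbij : Function.Bijective f := Finite.injective_iff_bijective.1 hfinj
  let e : K ≃ K := Equiv.ofBijective f hfbij
  -- support of vectors in the complex span
  have hsupp : ∀ w ∈ Submodule.span ℂ (insigSetC n c b A 1),
      ∀ i : Fin (n 1), ¬ Insignif n c b A 1 i → w i = 0 := by
    intro w hw
    induction hw using Submodule.span_induction with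
    | mem x hx =>
      obtain ⟨l, hl, rfl⟩ := hx
      intro i hi
      rw [Pi.single_apply, if_neg (by rintro rfl; exact hi hl)]
    | zero => intro i _; rfl
    | add x y hx hy ihx ihy =>
      intro i hi; show x i + y i = 0; rw [ihx i hi, ihy i hi, add_zero]
    | smul a x hx ihx =>
      intro i hi; show a * x i = 0; rw [ihx i hi, mul_zero]
  -- entries of cycMat in insignificant columns
  have hcol : ∀ (k : Fin (n 1)), Insignif n c b A 1 k → ∀ i : Fin (n 1),
      cycMat n c b A m 1 (hnper 1) i k = if i = nxt k then 1 else 0 := by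
    intro k hk i
    have h1 := congrFun (key k hk).2 i
    rw [Matrix.mulVec_single] at h1
    rw [Pi.single_apply] at h1
    simpa using h1
  refine ⟨?_, ?_, ⟨e, ?_⟩, ?_⟩
  · intro l hl
    exact ⟨nxt l, (key l hl).1, (key l hl).2⟩
  · intro v hv
    induction hv using Submodule.span_induction with
    | mem x hx =>
      obtain ⟨l, hl, rfl⟩ := hx
      rw [(key l hl).2]
      exact Submodule.subset_span ⟨_, (key l hl).1, rfl⟩
    | zero => rw [Matrix.mulVec_zero]; exact Submodule.zero_mem _
    | add x y hx hy ihx ihy => rw [Matrix.mulVec_add]; exact Submodule.add_mem _ ihx ihy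
    | smul a x hx ihx => rw [Matrix.mulVec_smul]; exact Submodule.smul_mem _ _ ihx
  · intro l
    exact (key l.1 l.2).2
  · intro μ v hv hv0 heig
    -- eigen relation on insignificant coordinates
    have hrel : ∀ k : K, v k.1 = μ * v ((e k).1 : Fin (n 1)) := by
      intro k
      have h1 := congrFun heig (nxt k.1)
      have h2 : (((cycMat n c b A m 1 (hnper 1)).map (fun x : ℝ => (x : ℂ))).mulVec v)
          (nxt k.1) = ∑ k' : Fin (n 1), (if k' = k.1 then v k.1 else 0) := by
        show ∑ k' : Fin (n 1),
          ((cycMat n c b A m 1 (hnper 1) (nxt k.1) k' : ℝ) : ℂ) * v k' = _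
        apply Finset.sum_congr rfl
        intro k' _
        by_cases hk' : Insignif n c b A 1 k'
        · rw [hcol k' hk' (nxt k.1)]
          by_cases he : k' = k.1
          · subst he
            rw [if_pos rfl, if_pos rfl]
            norm_num
          · rw [if_neg (fun hc => he (hnxtinj k' k.1 hk' k.2 hc.symm)), if_neg he]
            norm_num
        · rw [hsupp v hv k' hk', mul_zero,
            if_neg (fun hc : k' = k.1 => hk' (hc ▸ k.2))]
      rw [h2, Finset.sum_ite_eq' Finset.univ k.1 (fun _ => v k.1),
        if_pos (Finset.mem_univ _)] at h1
      rw [h1]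
      rfl
    have hiter : ∀ (q : ℕ) (k : K), v k.1 = μ ^ q * v (((e ^ q) k).1 : Fin (n 1)) := by
      intro q
      induction q with
      | zero => intro k; simp
      | succ q ih =>
        intro k
        have h4 : (e ^ (q + 1)) k = (e ^ q) (e k) := by rw [pow_succ]; rfl
        rw [hrel k, ih (e k), h4]
        ring
    -- find a nonzero insignificant coordinate
    obtain ⟨i, hi⟩ := Function.ne_iff.1 hv0
    have hins : Insignif n c b A 1 i := by
      by_contra hcon
      exact hi (hsupp v hv i hcon)
    have hq : 0 < orderOf e := orderOf_pos e
    have h5 := hiter (orderOf e) ⟨i, hins⟩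
    rw [pow_orderOf_eq_one e] at h5
    have h6 : μ ^ orderOf e * v i = 1 * v i := by
      rw [one_mul]
      exact h5.symm
    have hμq : μ ^ orderOf e = 1 := mul_right_cancel₀ hi h6
    have habs : ‖μ‖ ^ orderOf e = 1 := by
      have h7 := congrArg (fun z : ℂ => ‖z‖) hμq
      rwa [norm_pow, norm_one] at h7
    rcases lt_trichotomy ‖μ‖ 1 with hlt | heq | hgt
    · exfalso
      have := pow_lt_one₀ (norm_nonneg μ) hlt (Nat.pos_iff_ne_zero.1 hq)
      rw [habs] at this
      exact lt_irrefl 1 this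
    · exact heq
    · exfalso
      have := one_lt_pow₀ hgt (Nat.pos_iff_ne_zero.1 hq)
      rw [habs] at this
      exact lt_irrefl 1 this
end

section
/- Consider the generalised Lotka–Volterra system ẋ_i = x_i(r_i + Σ_{j=1}^n a_{ij} x_j), i = 1,…,n, on the closed positive orthant ℝⁿ_{0,+}. The open positive orthant ℝⁿ₊ contains α- or ω-limit points of the induced flow — i.e. there exists a solution x(τ) in ℝⁿ₊ (defined on a maximal forward, respectively backward, half-line) whose ω-limit set (respectively α-limit set) intersects ℝⁿ₊ — if and only if the system admits an interior steady state, i.e. a point x ∈ ℝⁿ₊ with all coordinates positive satisfying r_i + Σ_{j=1}^n a_{ij} x_j = 0 for every i. -/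
open Filter

lemma glv_lin_sum {N : ℕ} (F : (Fin N → ℝ) →ₗ[ℝ] ℝ) (v : Fin N → ℝ) :
    ∑ i, F (Pi.single i 1) * v i = F v := by
  conv_rhs => rw [← Finset.univ_sum_single v]
  rw [map_sum]
  refine Finset.sum_congr rfl fun i _ => ?_
  have h : Pi.single i (v i) = v i • (Pi.single i (1:ℝ) : Fin N → ℝ) := by
    rw [← Pi.single_smul, smul_eq_mul, mul_one]
  rw [h, map_smul, smul_eq_mul, mul_comm]

lemma glv_sep {N : ℕ} (r : Fin N → ℝ) (a : Fin N → Fin N → ℝ) (p : Fin N → ℝ)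
    (hp : ∀ i, 0 < p i)
    (hns : ¬ ∃ y : Fin N → ℝ, (∀ i, 0 < y i) ∧ ∀ i, r i + ∑ j, a i j * y j = 0) :
    ∃ c : Fin N → ℝ, (∀ y : Fin N → ℝ, (∀ i, 0 < y i) →
        0 ≤ ∑ i, c i * (r i + ∑ j, a i j * y j)) ∧
      0 < ∑ i, c i * (r i + ∑ j, a i j * p j) := by
  suffices h : ∃ F : (Fin N → ℝ) →ₗ[ℝ] ℝ, (∀ y : Fin N → ℝ, (∀ i, 0 < y i) →
      0 ≤ F (fun i => r i + ∑ j, a i j * y j)) ∧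
      0 < F (fun i => r i + ∑ j, a i j * p j) by
    obtain ⟨F, h1, h2⟩ := h
    refine ⟨fun i => F (Pi.single i 1), fun y hy => ?_, ?_⟩
    · rw [glv_lin_sum F]; exact h1 y hy
    · rw [glv_lin_sum F]; exact h2
  set Lm : (Fin N → ℝ) →ₗ[ℝ] (Fin N → ℝ) := (Matrix.of a).mulVecLin with hLmdef
  have hLm : ∀ (v : Fin N → ℝ) i, Lm v i = ∑ j, a i j * v j := by
    intro v i
    simp [hLmdef, Matrix.mulVecLin_apply, Matrix.mulVec, dotProduct]
  have hphi : ∀ v : Fin N → ℝ, (fun i => r i + ∑ j, a i j * v j) = r + Lm v := by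
    intro v; funext i; simp [hLm]
  set S : Submodule ℝ (Fin N → ℝ) := LinearMap.range Lm with hSdef
  by_cases hr : r ∈ S
  · -- r in range: work inside S with Hahn-Banach for open sets
    let g : (Fin N → ℝ) →L[ℝ] S := LinearMap.toContinuousLinearMap (Lm.rangeRestrict)
    have gsurj : Function.Surjective g := Lm.surjective_rangeRestrict
    have gopen : IsOpenMap g := ContinuousLinearMap.isOpenMap g gsurj
    have hgy : ∀ y, ((g y : Fin N → ℝ)) = Lm y := fun y => rfl
    let r' : S := ⟨r, hr⟩
    let O : Set (Fin N → ℝ) := Set.pi Set.univ fun _ : Fin N => Set.Ioi (0:ℝ)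
    have hOmem : ∀ y : Fin N → ℝ, y ∈ O ↔ ∀ i, 0 < y i := by
      intro y; simp [O, Set.mem_pi]
    have hOopen : IsOpen O := isOpen_set_pi Set.finite_univ fun i _ => isOpen_Ioi
    have hOconv : Convex ℝ O := convex_pi fun i _ => convex_Ioi 0
    set C : Set S := (fun y => g y + r') '' O with hCdef
    have hCeq : C = (fun u => r' + u) '' (g '' O) := by
      rw [Set.image_image]
      refine Set.image_congr fun y _ => add_comm _ _
    have hCopen : IsOpen C := by
      rw [hCeq]
      exact (Homeomorph.addLeft r').isOpenMap _ (gopen _ hOopen)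
    have hCconv : Convex ℝ C := by
      rw [hCeq]
      exact (hOconv.linear_image (g : (Fin N → ℝ) →ₗ[ℝ] S)).translate r'
    have h0 : (0 : S) ∉ C := by
      rintro ⟨y, hy, hy0⟩
      apply hns
      refine ⟨y, (hOmem y).1 hy, fun i => ?_⟩
      have hval : (Lm y) + r = 0 := by
        have := congrArg (Subtype.val) hy0
        simpa [hgy] using this
      have h2 := congrFun hval i
      have : Lm y i + r i = 0 := h2
      rw [hLm] at this
      linarith
    obtain ⟨f, hf⟩ := geometric_hahn_banach_open_point hCconv hCopen h0
    obtain ⟨F, hF⟩ := LinearMap.exists_extend (-(f.toLinearMap))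
    have key : ∀ y : Fin N → ℝ, (∀ i, 0 < y i) →
        0 < F (fun i => r i + ∑ j, a i j * y j) := by
      intro y hy
      set u : S := g y + r' with hu
      have huval : ((u : Fin N → ℝ)) = fun i => r i + ∑ j, a i j * y j := by
        funext i
        show Lm y i + r i = r i + ∑ j, a i j * y j
        rw [hLm]; ring
      have hFu : F (u : Fin N → ℝ) = -(f u) := by
        have := congrArg (fun (G : S →ₗ[ℝ] ℝ) => G u) hF
        simpa using this
      have humem : u ∈ C := ⟨y, (hOmem y).2 hy, rfl⟩
      have hfu : f u < 0 := by simpa using hf u humem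
      rw [← huval, hFu]
      linarith
    exact ⟨F, fun y hy => le_of_lt (key y hy), key p hp⟩
  · -- r not in range: a functional killing S, positive at r
    obtain ⟨T, hT⟩ := Submodule.exists_isCompl S
    let pr : (Fin N → ℝ) →ₗ[ℝ] T := T.linearProjOfIsCompl S hT.symm
    have hprS : ∀ v ∈ S, pr v = 0 := fun v hv =>
      Submodule.linearProjOfIsCompl_apply_right' hT.symm hv
    have hpr_r : pr r ≠ 0 := by
      intro h
      exact hr ((Submodule.linearProjOfIsCompl_apply_eq_zero_iff hT.symm).1 h)
    obtain ⟨ℓ, hℓ1, hℓ2⟩ := exists_dual_vector ℝ (pr r) (norm_ne_zero_iff.2 hpr_r)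
    have key : ∀ v : Fin N → ℝ,
        (ℓ.toLinearMap.comp pr) (fun i => r i + ∑ j, a i j * v j) = ‖pr r‖ := by
      intro v
      rw [hphi v]
      have hLv : pr (Lm v) = 0 := hprS (Lm v) ⟨v, rfl⟩
      simp [map_add, hLv, hℓ2]
    have hpos : (0:ℝ) < ‖pr r‖ := norm_pos_iff.2 hpr_r
    refine ⟨ℓ.toLinearMap.comp pr, fun y hy => ?_, ?_⟩
    · rw [key y]; exact le_of_lt hpos
    · rw [key p]; exact hpos

lemma glv_unbounded (g : ℝ → ℝ) (σ : ℕ → ℝ) (L d h : ℝ) (hd : 0 < d) (hh : 0 ≤ h)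
    (hmono : ∀ s t : ℝ, 0 ≤ s → s ≤ t → g s ≤ g t)
    (hbdd : ∀ t : ℝ, 0 ≤ t → g t ≤ L)
    (hσ : Tendsto σ atTop atTop)
    (hvisit : ∀ᶠ k in atTop, 0 ≤ σ k ∧ g (σ k) + d ≤ g (σ k + h)) : False := by
  have main : ∀ j : ℕ, ∃ T : ℝ, 0 ≤ T ∧ g 0 + j * d ≤ g T := by
    intro j
    induction j with
    | zero => exact ⟨0, le_refl 0, by simp⟩
    | succ j ih =>
      obtain ⟨T, hT0, hTg⟩ := ih
      obtain ⟨k, hk1, hk0, hkv⟩ := ((hσ.eventually_ge_atTop T).and hvisit).exists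
      have h1 : g T ≤ g (σ k) := hmono T (σ k) hT0 hk1
      refine ⟨σ k + h, by linarith, ?_⟩
      push_cast
      linarith
  obtain ⟨j, hj⟩ := exists_nat_gt ((L - g 0) / d)
  obtain ⟨T, hT0, hTg⟩ := main j
  have hb := hbdd T hT0
  rw [div_lt_iff₀ hd] at hj
  linarith

lemma glv_escape {E : Type*} [NormedAddCommGroup E] [NormedSpace ℝ E]
    (x : ℝ → E) (F : ℝ → E) (p : E) (t₀ h ε M : ℝ)
    (hε : 0 < ε) (hh : 0 ≤ h) (hMh : M * h ≤ ε / 2)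
    (hder : ∀ t ∈ Set.Icc t₀ (t₀ + h), HasDerivAt x (F t) t)
    (hF : ∀ t ∈ Set.Icc t₀ (t₀ + h), ‖x t - p‖ ≤ 2 * ε → ‖F t‖ ≤ M)
    (hstart : ‖x t₀ - p‖ ≤ ε) :
    ∀ t ∈ Set.Icc t₀ (t₀ + h), ‖x t - p‖ ≤ 2 * ε := by
  by_contra hbad
  push_neg at hbad
  obtain ⟨t₁, ht₁, ht₁b⟩ := hbad
  have hcont : ContinuousOn x (Set.Icc t₀ (t₀ + h)) := fun t ht =>
    (hder t ht).continuousAt.continuousWithinAt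
  have hsub : Set.Icc t₀ t₁ ⊆ Set.Icc t₀ (t₀ + h) := Set.Icc_subset_Icc le_rfl ht₁.2
  set K : Set ℝ := Set.Icc t₀ t₁ ∩ {t | 2 * ε ≤ ‖x t - p‖} with hK
  have hKne : K.Nonempty := ⟨t₁, ⟨ht₁.1, le_refl t₁⟩, le_of_lt ht₁b⟩
  have hKbdd : BddBelow K := ⟨t₀, fun t ht => ht.1.1⟩
  have hKc : IsClosed K := by
    apply ContinuousOn.preimage_isClosed_of_isClosed
      ((hcont.mono hsub).sub continuousOn_const).norm isClosed_Icc
      (isClosed_Ici (a := 2 * ε))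
  set u := sInf K with hu
  have huK : u ∈ K := hKc.csInf_mem hKne hKbdd
  have hut₀ : t₀ < u := by
    rcases lt_or_eq_of_le huK.1.1 with h' | h'
    · exact h'
    · exfalso
      have := huK.2
      rw [← h'] at this
      simp only [Set.mem_setOf_eq] at this
      linarith
  have hbound : ∀ t ∈ Set.Ico t₀ u, ‖F t‖ ≤ M := by
    intro t ht
    have htIcc : t ∈ Set.Icc t₀ t₁ := ⟨ht.1, le_trans (le_of_lt ht.2) huK.1.2⟩
    have : t ∉ K := fun hmem => absurd (csInf_le hKbdd hmem) (not_le.2 ht.2)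
    have hlt : ‖x t - p‖ < 2 * ε := by
      by_contra hge
      exact this ⟨htIcc, le_of_not_gt hge⟩
    exact hF t (hsub htIcc) (le_of_lt hlt)
  have hmvt := norm_image_sub_le_of_norm_deriv_le_segment'
    (f := x) (f' := F) (a := t₀) (b := u)
    (fun t ht => (hder t (hsub (Set.Icc_subset_Icc le_rfl huK.1.2 ht))).hasDerivWithinAt)
    hbound u (Set.right_mem_Icc.2 huK.1.1)
  have huh : u - t₀ ≤ h := by
    have : u ≤ t₀ + h := le_trans huK.1.2 ht₁.2
    linarith
  have hM0 : 0 ≤ M := le_trans (norm_nonneg _) (hF t₀ ⟨le_refl _, by linarith⟩ (by linarith))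
  have h2 : ‖x u - x t₀‖ ≤ ε / 2 := by
    calc ‖x u - x t₀‖ ≤ M * (u - t₀) := hmvt
      _ ≤ M * h := by nlinarith
      _ ≤ ε / 2 := hMh
  have h3 : ‖x u - p‖ ≤ ‖x u - x t₀‖ + ‖x t₀ - p‖ := by
    simpa [dist_eq_norm] using dist_triangle (x u) (x t₀) p
  have h4 : 2 * ε ≤ ‖x u - p‖ := huK.2
  linarith

lemma glv_core {N : ℕ} (r : Fin N → ℝ) (a : Fin N → Fin N → ℝ)
    (x : ℝ → Fin N → ℝ) (s : ℝ) (hs : s = 1 ∨ s = -1)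
    (hder : ∀ τ : ℝ, 0 ≤ τ →
      HasDerivAt x (fun i => s * (x τ i * (r i + ∑ j, a i j * x τ j))) τ)
    (hpos : ∀ τ : ℝ, 0 ≤ τ → ∀ i, 0 < x τ i)
    (p : Fin N → ℝ) (hp : ∀ i, 0 < p i)
    (σ : ℕ → ℝ) (hσ : Tendsto σ atTop atTop)
    (hlim : Tendsto (fun k => x (σ k)) atTop (nhds p))
    (c : Fin N → ℝ)
    (hc0 : ∀ y : Fin N → ℝ, (∀ i, 0 < y i) → 0 ≤ ∑ i, c i * (r i + ∑ j, a i j * y j))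
    (hcp : 0 < ∑ i, c i * (r i + ∑ j, a i j * p j)) : False := by
  have hss : s * s = 1 := by rcases hs with h | h <;> rw [h] <;> norm_num
  have hsabs : |s| = 1 := by rcases hs with h | h <;> rw [h] <;> norm_num
  set q : (Fin N → ℝ) → ℝ := fun y => ∑ i, c i * (r i + ∑ j, a i j * y j) with hqdef
  set W : ℝ → ℝ := fun t => s * ∑ i, c i * Real.log (x t i) with hWdef
  -- derivative of W
  have hW : ∀ τ : ℝ, 0 ≤ τ → HasDerivAt W (q (x τ)) τ := by
    intro τ hτ
    have hxi : ∀ i, HasDerivAt (fun t => x t i)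
        (s * (x τ i * (r i + ∑ j, a i j * x τ j))) τ :=
      fun i => (hasDerivAt_pi.1 (hder τ hτ)) i
    have hlog : ∀ i, HasDerivAt (fun t => Real.log (x t i))
        (s * (r i + ∑ j, a i j * x τ j)) τ := by
      intro i
      have h0 : x τ i ≠ 0 := ne_of_gt (hpos τ hτ i)
      have := (hxi i).log h0
      convert this using 1
      field_simp
    have hsum : HasDerivAt (fun t => ∑ i, c i * Real.log (x t i))
        (∑ i, c i * (s * (r i + ∑ j, a i j * x τ j))) τ :=
      HasDerivAt.fun_sum fun i _ => (hlog i).const_mul (c i)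
    have h2 := hsum.const_mul s
    refine h2.congr_deriv ?_
    rw [Finset.mul_sum]
    refine Finset.sum_congr rfl fun i _ => ?_
    have : s * (c i * (s * (r i + ∑ j, a i j * x τ j)))
        = (s * s) * (c i * (r i + ∑ j, a i j * x τ j)) := by ring
    rw [this, hss, one_mul]
  -- monotonicity of W on [0, ∞)
  have hmono : MonotoneOn W (Set.Ici (0:ℝ)) := by
    apply monotoneOn_of_deriv_nonneg (convex_Ici 0)
    · exact fun τ hτ => (hW τ hτ).continuousAt.continuousWithinAt
    · intro τ hτ
      rw [interior_Ici] at hτ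
      exact ((hW τ (le_of_lt hτ)).differentiableAt).differentiableWithinAt
    · intro τ hτ
      rw [interior_Ici] at hτ
      rw [(hW τ (le_of_lt hτ)).deriv]
      exact hc0 (x τ) (hpos τ (le_of_lt hτ))
  -- limit of W along σ
  have hxik : ∀ i, Tendsto (fun k => x (σ k) i) atTop (nhds (p i)) :=
    fun i => (tendsto_pi_nhds.1 hlim) i
  have hVlim : Tendsto (fun k => W (σ k)) atTop
      (nhds (s * ∑ i, c i * Real.log (p i))) := by
    apply Tendsto.const_mul
    exact tendsto_finset_sum _ fun i _ =>
      ((hxik i).log (ne_of_gt (hp i))).const_mul (c i)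
  set Lv : ℝ := s * ∑ i, c i * Real.log (p i) with hLv
  have hbdd : ∀ t : ℝ, 0 ≤ t → W t ≤ Lv := by
    intro t ht
    refine ge_of_tendsto hVlim ?_
    filter_upwards [hσ.eventually_ge_atTop t] with k hk
    exact hmono (Set.mem_Ici.2 ht) (Set.mem_Ici.2 (le_trans ht hk)) hk
  set δ : ℝ := q p with hδ
  have hδpos : 0 < δ := hcp
  -- choose ε
  have hUopen : IsOpen {y : Fin N → ℝ | ∀ i, 0 < y i} := by
    have : {y : Fin N → ℝ | ∀ i, 0 < y i}
        = Set.pi Set.univ fun _ : Fin N => Set.Ioi (0:ℝ) := by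
      ext y; simp [Set.mem_pi]
    rw [this]
    exact isOpen_set_pi Set.finite_univ fun i _ => isOpen_Ioi
  obtain ⟨ρ, hρpos, hρ⟩ := Metric.isOpen_iff.1 hUopen p hp
  have hqcont : Continuous q := by
    apply continuous_finset_sum
    intro i _
    exact continuous_const.mul (continuous_const.add
      (continuous_finset_sum _ fun j _ => continuous_const.mul (continuous_apply j)))
  have hqc : ContinuousAt q p := hqcont.continuousAt
  obtain ⟨ε₁, hε₁pos, hε₁⟩ := Metric.continuousAt_iff.1 hqc (δ/2) (by linarith)
  set ε : ℝ := min (ρ/3) (ε₁/3) with hε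
  have hεpos : 0 < ε := lt_min (by linarith) (by linarith)
  have hball : ∀ y : Fin N → ℝ, dist y p ≤ 2*ε → (∀ i, 0 < y i) ∧ δ/2 ≤ q y := by
    intro y hy
    have h2ρ : dist y p < ρ := by
      have : 2 * ε ≤ 2 * (ρ/3) := by
        have := min_le_left (ρ/3) (ε₁/3); linarith
      linarith
    have h2ε₁ : dist y p < ε₁ := by
      have : 2 * ε ≤ 2 * (ε₁/3) := by
        have := min_le_right (ρ/3) (ε₁/3); linarith
      linarith
    refine ⟨hρ (Metric.mem_ball.2 h2ρ), ?_⟩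
    have := hε₁ h2ε₁
    rw [Real.dist_eq] at this
    have := abs_lt.1 this
    linarith [this.1]
  -- bound on the vector field on the closed ball
  set G : (Fin N → ℝ) → (Fin N → ℝ) :=
    fun y => (fun i => y i * (r i + ∑ j, a i j * y j)) with hGdef
  have hGcont : Continuous G := by
    apply continuous_pi
    intro i
    exact (continuous_apply i).mul (continuous_const.add
      (continuous_finset_sum _ fun j _ => continuous_const.mul (continuous_apply j)))
  obtain ⟨M₀, hM₀⟩ := (isCompact_closedBall p (2*ε)).exists_bound_of_continuousOn
    hGcont.continuousOn
  set M : ℝ := max M₀ 1 with hM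
  have hMpos : (0:ℝ) < M := lt_of_lt_of_le one_pos (le_max_right _ _)
  set h : ℝ := ε / (2*M) with hh
  have hhpos : 0 < h := div_pos hεpos (by linarith)
  have hMh : M * h ≤ ε / 2 := by
    rw [hh]
    rw [mul_div_assoc']
    rw [div_le_div_iff₀ (by linarith) (by norm_num)]
    ring_nf
    nlinarith
  -- visits give a definite increase
  have hvisit : ∀ᶠ k in atTop, 0 ≤ σ k ∧ W (σ k) + (δ/2*h) ≤ W (σ k + h) := by
    have hev1 : ∀ᶠ k in atTop, (0:ℝ) ≤ σ k := hσ.eventually_ge_atTop 0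
    have hev2 : ∀ᶠ k in atTop, x (σ k) ∈ Metric.ball p ε :=
      hlim.eventually (Metric.ball_mem_nhds p hεpos)
    filter_upwards [hev1, hev2] with k hk0 hkb
    refine ⟨hk0, ?_⟩
    set t₀ : ℝ := σ k with ht₀
    -- solution stays in the 2ε ball on [t₀, t₀ + h]
    have hstay : ∀ t ∈ Set.Icc t₀ (t₀ + h), ‖x t - p‖ ≤ 2 * ε := by
      apply glv_escape x (fun t => (fun i => s * (x t i * (r i + ∑ j, a i j * x t j))))
        p t₀ h ε M hεpos (le_of_lt hhpos) hMh
      · intro t ht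
        exact hder t (le_trans hk0 ht.1)
      · intro t ht hxt
        have hmem : x t ∈ Metric.closedBall p (2*ε) := by
          rw [Metric.mem_closedBall, dist_eq_norm]; exact hxt
        have hb := hM₀ (x t) hmem
        have heq : (fun i => s * (x t i * (r i + ∑ j, a i j * x t j))) = s • G (x t) := by
          funext i; simp [hGdef, Pi.smul_apply, smul_eq_mul]
        rw [heq, norm_smul]
        calc ‖s‖ * ‖G (x t)‖ = ‖G (x t)‖ := by
              rw [Real.norm_eq_abs, hsabs, one_mul]
          _ ≤ M₀ := hb
          _ ≤ M := le_max_left _ _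
      · rw [← dist_eq_norm]
        exact le_of_lt hkb
    -- derivative of W is at least δ/2 on the window
    have hIcc0 : ∀ t ∈ Set.Icc t₀ (t₀ + h), (0:ℝ) ≤ t := fun t ht => le_trans hk0 ht.1
    have hmono2 : MonotoneOn (fun t => W t - δ/2 * t) (Set.Icc t₀ (t₀ + h)) := by
      apply monotoneOn_of_deriv_nonneg (convex_Icc _ _)
      · intro t ht
        exact ((hW t (hIcc0 t ht)).sub (by
          simpa using (hasDerivAt_id t).const_mul (δ/2))).continuousAt.continuousWithinAt
      · intro t ht
        rw [interior_Icc] at ht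
        exact ((hW t (hIcc0 t (Set.mem_Icc_of_Ioo ht))).sub (by
          simpa using (hasDerivAt_id t).const_mul (δ/2))).differentiableAt.differentiableWithinAt
      · intro t ht
        rw [interior_Icc] at ht
        have htIcc := Set.mem_Icc_of_Ioo ht
        have hd : HasDerivAt (fun t => W t - δ/2 * t) (q (x t) - δ/2) t :=
          (hW t (hIcc0 t htIcc)).sub (by simpa using (hasDerivAt_id t).const_mul (δ/2))
        rw [hd.deriv]
        have := (hball (x t) (by rw [dist_eq_norm]; exact hstay t htIcc)).2
        linarith
    have hend : W t₀ - δ/2 * t₀ ≤ W (t₀ + h) - δ/2 * (t₀ + h) :=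
      hmono2 (Set.left_mem_Icc.2 (by linarith)) (Set.right_mem_Icc.2 (by linarith))
        (by linarith)
    nlinarith
  exact glv_unbounded W σ Lv (δ/2*h) h (by positivity) (le_of_lt hhpos)
    (fun s t hs hst => hmono (Set.mem_Ici.2 hs) (Set.mem_Ici.2 (le_trans hs hst)) hst)
    hbdd hσ hvisit

/-- For the generalised Lotka–Volterra system
`ẋ_i = x_i (r_i + Σ_j a_{ij} x_j)` on the closed positive orthant, the open positive orthant
contains `α`- or `ω`-limit points of the flow — i.e. there is a solution lying in the open
orthant (on a forward, respectively backward, half-line) with an `ω`-limit point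
(respectively `α`-limit point) in the open orthant — if and only if the system admits an
interior steady state, i.e. a point with all coordinates positive where
`r_i + Σ_j a_{ij} x_j = 0` for every `i`. -/
theorem glv_interior_limit_points_iff_interior_steady_state
    (N : ℕ) (r : Fin N → ℝ) (a : Fin N → Fin N → ℝ) :
    ((∃ (x : ℝ → Fin N → ℝ) (p : Fin N → ℝ) (τs : ℕ → ℝ),
        (∀ τ : ℝ, 0 ≤ τ →
          HasDerivAt x (fun i => x τ i * (r i + ∑ j, a i j * x τ j)) τ) ∧
        (∀ τ : ℝ, 0 ≤ τ → ∀ i, 0 < x τ i) ∧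
        (∀ i, 0 < p i) ∧
        Tendsto τs atTop atTop ∧
        Tendsto (fun k => x (τs k)) atTop (nhds p)) ∨
     (∃ (x : ℝ → Fin N → ℝ) (p : Fin N → ℝ) (τs : ℕ → ℝ),
        (∀ τ : ℝ, τ ≤ 0 →
          HasDerivAt x (fun i => x τ i * (r i + ∑ j, a i j * x τ j)) τ) ∧
        (∀ τ : ℝ, τ ≤ 0 → ∀ i, 0 < x τ i) ∧
        (∀ i, 0 < p i) ∧
        Tendsto τs atTop atBot ∧
        Tendsto (fun k => x (τs k)) atTop (nhds p)))
    ↔ ∃ x : Fin N → ℝ, (∀ i, 0 < x i) ∧ ∀ i, r i + ∑ j, a i j * x j = 0 := by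
  constructor
  · intro hLHS
    by_contra hns
    rcases hLHS with ⟨x, p, τs, hd, hpos, hp, hτ, hl⟩ | ⟨x, p, τs, hd, hpos, hp, hτ, hl⟩
    · -- forward orbit, ω-limit point
      obtain ⟨c, hc0, hcp⟩ := glv_sep r a p hp hns
      refine glv_core r a x 1 (Or.inl rfl) ?_ hpos p hp τs hτ hl c hc0 hcp
      intro τ hτ'
      simpa using hd τ hτ'
    · -- backward orbit, α-limit point: reverse time
      obtain ⟨c, hc0, hcp⟩ := glv_sep r a p hp hns
      set y : ℝ → Fin N → ℝ := fun τ => x (-τ) with hy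
      have hder2 : ∀ τ : ℝ, 0 ≤ τ →
          HasDerivAt y (fun i => (-1) * (y τ i * (r i + ∑ j, a i j * y τ j))) τ := by
        intro τ hτ'
        have h1 := hd (-τ) (by linarith)
        have h2 : HasDerivAt (fun t : ℝ => -t) (-1) τ := by
          exact hasDerivAt_neg τ
        have h3 := HasDerivAt.scomp τ h1 h2
        exact h3.congr_deriv (by funext i; rfl)
      have hpos2 : ∀ τ : ℝ, 0 ≤ τ → ∀ i, 0 < y τ i := fun τ hτ' i =>
        hpos (-τ) (by linarith) i
      have hσ2 : Tendsto (fun k => -(τs k)) atTop atTop :=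
        tendsto_neg_atBot_atTop.comp hτ
      have hl2 : Tendsto (fun k => y (-(τs k))) atTop (nhds p) := by
        have : (fun k => y (-(τs k))) = fun k => x (τs k) := by
          funext k; simp [hy]
        rw [this]; exact hl
      exact glv_core r a y (-1) (Or.inr rfl) hder2 hpos2 p hp _ hσ2 hl2 c hc0 hcp
  · rintro ⟨xs, hxs, hsteady⟩
    left
    refine ⟨fun _ => xs, xs, fun k => (k : ℝ), ?_, fun _ _ i => hxs i, hxs,
      tendsto_natCast_atTop_atTop, tendsto_const_nhds⟩
    intro τ _
    have : (fun i => xs i * (r i + ∑ j, a i j * xs j)) = (0 : Fin N → ℝ) := by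
      funext i; rw [hsteady i, mul_zero]; rfl
    rw [this]
    exact hasDerivAt_const τ xs
end

section
/- Consider the planar system ẋ₁ = α₁x₁(1−x₁+β₁x₂), ẋ₂ = α₂x₂(1−x₂+γ₂x₁) with α₁ > 0 and α₂ > 0, and its equilibria ξ₁ = (1,0), ξ₂ = (0,1). If 1+β₁ > 0, 1+γ₂ > 0, and β₁γ₂ > 1, then: (i) the only equilibria of the system in the closed quadrant ℝ²_{0,+} are (0,0), ξ₁ and ξ₂; and (ii) for every x₀ ∈ ℝ²₊ the maximal solution with x(0) = x₀ remains in ℝ²₊ and both of its components tend to +∞ as τ tends to the right endpoint of its maximal interval of existence. -/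
open Filter

section LV2Aux

open Set Metric intervalIntegral Real

lemma HasDerivAt.fst' {y : ℝ → ℝ × ℝ} {w : ℝ × ℝ} {s : ℝ} (h : HasDerivAt y w s) :
    HasDerivAt (fun s => (y s).1) w.1 s := by
  exact (ContinuousLinearMap.fst ℝ ℝ ℝ).hasFDerivAt.comp_hasDerivAt s h

lemma HasDerivAt.snd' {y : ℝ → ℝ × ℝ} {w : ℝ × ℝ} {s : ℝ} (h : HasDerivAt y w s) :
    HasDerivAt (fun s => (y s).2) w.2 s := by
  exact (ContinuousLinearMap.snd ℝ ℝ ℝ).hasFDerivAt.comp_hasDerivAt s h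

/-- Positivity propagation for `u' = u * g`. -/
lemma pos_of_deriv_mul {u g : ℝ → ℝ} (hg : Continuous g)
    (hu : ∀ s, HasDerivAt u (u s * g s) s) (h0 : 0 < u 0) : ∀ s, 0 < u s := by
  set G : ℝ → ℝ := fun s => ∫ t in (0:ℝ)..s, g t with hGdef
  have hG : ∀ s, HasDerivAt G (g s) s := fun s => (hg.integral_hasStrictDerivAt 0 s).hasDerivAt
  set h : ℝ → ℝ := fun s => u s * Real.exp (-G s) with hhdef
  have hh : ∀ s, HasDerivAt h 0 s := by
    intro s
    have h1 : HasDerivAt (fun s => Real.exp (-G s)) (Real.exp (-G s) * -g s) s :=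
      ((hG s).neg).exp
    have := (hu s).fun_mul h1
    exact this.congr_deriv (by ring)
  have hconst : ∀ s, h s = h 0 := by
    intro s
    exact is_const_of_deriv_eq_zero (fun t => (hh t).differentiableAt) (fun t => (hh t).deriv) s 0
  intro s
  have h0' : h 0 = u 0 := by
    simp [hhdef, hGdef, intervalIntegral.integral_same]
  have hs := hconst s
  rw [h0'] at hs
  have : u s = u 0 * Real.exp (G s) := by
    have hexp : Real.exp (-G s) > 0 := Real.exp_pos _
    simp only [hhdef] at hs
    rw [← hs, mul_assoc, ← Real.exp_add, neg_add_cancel, Real.exp_zero, mul_one]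
  rw [this]
  positivity


/-- If `f > 0` on `[a,b)`, `f b = 0` and `f` has derivative `d` at `b`, then `d ≤ 0`. -/
lemma deriv_nonpos_boundary {f : ℝ → ℝ} {d a b : ℝ} (hab : a < b) (hd : HasDerivAt f d b)
    (hpos : ∀ s, a ≤ s → s < b → 0 < f s) (hb : f b = 0) : d ≤ 0 := by
  rw [hasDerivAt_iff_tendsto_slope] at hd
  have hle : Tendsto (slope f b) (nhdsWithin b (Set.Iio b)) (nhds d) :=
    hd.mono_left (nhdsWithin_mono _ (fun x hx => ne_of_lt hx))
  refine le_of_tendsto hle ?_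
  filter_upwards [Ioo_mem_nhdsLT_of_mem (Set.mem_Ioc.mpr ⟨hab, le_rfl⟩)] with s hs
  have h1 : 0 < f s := hpos s hs.1.le hs.2
  have h2 : s - b < 0 := sub_neg.mpr hs.2
  rw [slope_def_field]
  rw [div_nonpos_iff]
  left
  constructor
  · rw [hb]; simpa using h1.le
  · linarith

/-- Linear growth from a derivative lower bound. -/
lemma tendsto_atTop_of_deriv_ge {u d : ℝ → ℝ} {c s₁ : ℝ} (hc : 0 < c)
    (hu : ∀ s, HasDerivAt u (d s) s) (hd : ∀ s, s₁ ≤ s → c ≤ d s) :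
    Tendsto u atTop atTop := by
  have hder : ∀ s, HasDerivAt (fun s => u s - c * s) (d s - c) s := by
    intro s
    exact ((hu s).sub ((hasDerivAt_id' s).const_mul c)).congr_deriv (by ring)
  have hmono : MonotoneOn (fun s => u s - c * s) (Set.Ici s₁) := by
    apply monotoneOn_of_hasDerivWithinAt_nonneg (convex_Ici s₁)
      (fun s _ => (hder s).continuousAt.continuousWithinAt)
      (fun s _ => (hder s).hasDerivWithinAt)
    intro s hs
    rw [interior_Ici] at hs
    have := hd s (le_of_lt hs)
    linarith
  have hbound : ∀ s, s₁ ≤ s → u s₁ - c * s₁ + c * s ≤ u s := by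
    intro s hs
    have h2 : u s₁ - c * s₁ ≤ u s - c * s := hmono Set.self_mem_Ici (Set.mem_Ici.mpr hs) hs
    linarith
  have hlin : Tendsto (fun s : ℝ => u s₁ - c * s₁ + c * s) atTop atTop := by
    apply tendsto_atTop_add_const_left
    exact Tendsto.const_mul_atTop hc tendsto_id
  exact tendsto_atTop_mono' atTop
    (by filter_upwards [eventually_ge_atTop s₁] with s hs using hbound s hs) hlin

/-- A positive function with derivative `≥ c·u` on `[0,∞)` cannot be bounded. -/
lemma unbounded_of_deriv_ge_mul {u d : ℝ → ℝ} {c M : ℝ} (hc : 0 < c)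
    (hu : ∀ s, HasDerivAt u (d s) s) (hpos : ∀ s, 0 < u s)
    (hd : ∀ s, 0 ≤ s → c * u s ≤ d s) (hM : ∀ s, 0 ≤ s → u s ≤ M) : False := by
  have hmono : MonotoneOn u (Set.Ici (0:ℝ)) := by
    apply monotoneOn_of_hasDerivWithinAt_nonneg (convex_Ici 0)
      (fun s _ => (hu s).continuousAt.continuousWithinAt)
      (fun s _ => (hu s).hasDerivWithinAt)
    intro s hs
    rw [interior_Ici] at hs
    have h1 := hd s hs.le
    nlinarith [hpos s]
  have hd' : ∀ s, (1:ℝ) ≤ s → c * u 0 ≤ d s := by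
    intro s hs
    have h1 : u 0 ≤ u s := hmono Set.self_mem_Ici (by simp; linarith) (by linarith)
    have := hd s (by linarith)
    nlinarith
  have := tendsto_atTop_of_deriv_ge (mul_pos hc (hpos 0)) hu hd'
  obtain ⟨s, hs1, hs2⟩ := ((tendsto_atTop.mp this (M+1)).and (eventually_ge_atTop 0)).exists
  have := hM s hs2
  linarith

/-- If `u` converges and has derivative `d` converging to `l`, then `l = 0`. -/
lemma limit_deriv_zero {u d : ℝ → ℝ} {a l : ℝ} (hu : ∀ s, HasDerivAt u (d s) s)
    (hul : Tendsto u atTop (nhds a)) (hdl : Tendsto d atTop (nhds l)) : l = 0 := by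
  by_contra hl0
  rcases lt_or_gt_of_ne hl0 with hneg | hpos
  · obtain ⟨s₁, hs₁⟩ := (eventually_atTop.mp (hdl.eventually_le_const (by linarith : l < l/2)))
    have : Tendsto (fun s => -u s) atTop atTop := by
      apply tendsto_atTop_of_deriv_ge (c := -l/2) (by linarith)
        (fun s => (hu s).neg)
      intro s hs
      have := hs₁ s hs
      linarith
    exact not_tendsto_nhds_of_tendsto_atTop this (-a) hul.neg
  · obtain ⟨s₁, hs₁⟩ := (eventually_atTop.mp (hdl.eventually_const_le (by linarith : l/2 < l)))
    have : Tendsto u atTop atTop :=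
      tendsto_atTop_of_deriv_ge (c := l/2) (by linarith) hu (fun s hs => hs₁ s hs)
    exact not_tendsto_nhds_of_tendsto_atTop this a hul

/-- A bounded `C¹` vector field on `ℝ × ℝ` has a global solution through any point. -/
lemma global_solution (F : ℝ × ℝ → ℝ × ℝ) (hF : ContDiff ℝ 1 F) (C : ℝ)
    (hC : ∀ p, ‖F p‖ ≤ C) (x₀ : ℝ × ℝ) :
    ∃ y : ℝ → ℝ × ℝ, y 0 = x₀ ∧ ∀ s, HasDerivAt y (F (y s)) s := by
  have hC0 : 0 ≤ C := le_trans (norm_nonneg _) (hC x₀)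
  -- Lipschitz on closed balls
  have hlip : ∀ R : ℝ, ∃ K : NNReal, LipschitzOnWith K F (closedBall x₀ R) := by
    intro R
    obtain ⟨K', hK'⟩ := (isCompact_closedBall x₀ R).exists_bound_of_continuousOn
      ((hF.continuous_fderiv one_ne_zero).continuousOn (s := closedBall x₀ R))
    refine ⟨⟨max K' 0, le_max_right _ _⟩, ?_⟩
    apply Convex.lipschitzOnWith_of_nnnorm_hasFDerivWithin_le (f' := fun p => fderiv ℝ F p)
      (fun p _ => ((hF.differentiable one_ne_zero) p).hasFDerivAt.hasFDerivWithinAt)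
      ?_ (convex_closedBall x₀ R)
    intro p hp
    apply NNReal.coe_le_coe.mp
    have := (hK' p hp).trans (le_max_left K' 0)
    exact this
  -- local solutions on [-n, n]
  have hex : ∀ n : ℕ, ∃ f : ℝ → ℝ × ℝ, f 0 = x₀ ∧
      ∀ t ∈ Icc (-(n:ℝ)) n, HasDerivWithinAt f (F (f t)) (Icc (-(n:ℝ)) n) t := by
    intro n
    obtain ⟨K, hK⟩ := hlip (C * n)
    have hCn0 : 0 ≤ C * n := by positivity
    have h0n : (0:ℝ) ∈ Icc (-(n:ℝ)) n := by constructor <;> simp [Nat.cast_nonneg]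
    have hpl : IsPicardLindelof (fun _ : ℝ => F) (⟨0, h0n⟩ : Icc (-(n:ℝ)) n) x₀
        ⟨C * n, hCn0⟩ 0 ⟨C, hC0⟩ K := by
      constructor
      · exact fun _ _ => hK
      · exact fun _ _ => continuousOn_const
      · exact fun _ _ p _ => hC p
      · simp
        exact le_rfl
    obtain ⟨f, hf0, hf⟩ := hpl.exists_eq_forall_mem_Icc_hasDerivWithinAt₀
    exact ⟨f, hf0, fun t ht => hf t ht⟩
  choose f hf0 hf using hex
  -- solutions stay in balls
  have hball : ∀ n : ℕ, ∀ t ∈ Icc (-(n:ℝ)) n, f n t ∈ closedBall x₀ (C * n) := by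
    intro n t ht
    have h0n : (0:ℝ) ∈ Icc (-(n:ℝ)) n := by constructor <;> simp [Nat.cast_nonneg]
    have := (convex_Icc (-(n:ℝ)) n).norm_image_sub_le_of_norm_hasDerivWithin_le
      (f' := fun t => F (f n t)) (hf n) (fun t _ => hC _) h0n ht
    rw [mem_closedBall, dist_eq_norm, ← hf0 n]
    refine this.trans ?_
    have : ‖t - 0‖ ≤ (n:ℝ) := by
      rw [sub_zero, Real.norm_eq_abs, abs_le]
      exact ⟨ht.1, ht.2⟩
    nlinarith
  -- uniqueness: agree on smaller intervals
  have hagree : ∀ m n : ℕ, n ≤ m → Set.EqOn (f m) (f n) (Icc (-(n:ℝ)) n) := by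
    intro m n hnm
    rcases Nat.eq_zero_or_pos n with rfl | hn
    · intro t ht
      simp only [Nat.cast_zero, neg_zero, Icc_self, mem_singleton_iff] at ht
      rw [ht, hf0 m, hf0 0]
    obtain ⟨K, hK⟩ := hlip (C * m)
    have hCn : C * n ≤ C * m := by
      apply mul_le_mul_of_nonneg_left _ hC0
      exact_mod_cast hnm
    have hsub : Icc (-(n:ℝ)) n ⊆ Icc (-(m:ℝ)) m := by
      apply Icc_subset_Icc <;> simp <;> exact_mod_cast hnm
    have h0mem : (0:ℝ) ∈ Ioo (-(n:ℝ)) n := by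
      constructor
      · simp; exact_mod_cast hn
      · exact_mod_cast hn
    apply ODE_solution_unique_of_mem_Icc (v := fun _ => F)
      (s := fun _ => closedBall x₀ (C * m)) (K := K) (fun _ _ => hK) h0mem
    · exact fun t ht => ((hf m t (hsub ht)).continuousWithinAt).mono hsub
    · intro t ht
      have htm : t ∈ Icc (-(m:ℝ)) m := hsub (Ioo_subset_Icc_self ht)
      have : -(m:ℝ) < t ∧ t < m := by
        constructor
        · calc -(m:ℝ) ≤ -(n:ℝ) := by simp; exact_mod_cast hnm
            _ < t := ht.1
        · calc t < (n:ℝ) := ht.2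
            _ ≤ m := by exact_mod_cast hnm
      exact (hf m t htm).hasDerivAt (Icc_mem_nhds this.1 this.2)
    · exact fun t ht => hball m t (hsub (Ioo_subset_Icc_self ht))
    · exact fun t ht => (hf n t ht).continuousWithinAt
    · exact fun t ht => (hf n t (Ioo_subset_Icc_self ht)).hasDerivAt (Icc_mem_nhds ht.1 ht.2)
    · intro t ht
      exact closedBall_subset_closedBall hCn (hball n t (Ioo_subset_Icc_self ht))
    · rw [hf0 m, hf0 n]
  -- glue
  set N : ℝ → ℕ := fun s => ⌈|s|⌉₊ + 1 with hNdef
  have hmemN : ∀ s : ℝ, s ∈ Icc (-(N s : ℝ)) (N s) := by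
    intro s
    have h1 : |s| ≤ (N s : ℝ) := by
      calc |s| ≤ (⌈|s|⌉₊ : ℝ) := Nat.le_ceil _
        _ ≤ _ := by simp [hNdef]
    rw [abs_le] at h1
    exact ⟨by linarith [h1.1], h1.2⟩
  set y : ℝ → ℝ × ℝ := fun s => f (N s) s with hydef
  have hcons : ∀ (n : ℕ) (s : ℝ), s ∈ Icc (-(n:ℝ)) n → y s = f n s := by
    intro n s hs
    have h1 := hagree (max n (N s)) (N s) (le_max_right _ _) (hmemN s)
    have h2 := hagree (max n (N s)) n (le_max_left _ _) hs
    rw [hydef]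
    simp only
    rw [← h1, h2]
  refine ⟨y, ?_, ?_⟩
  · have := hcons 1 0 (by norm_num)
    rw [this, hf0]
  · intro s
    have hsi : s ∈ Ioo (-(N s : ℝ)) (N s) := by
      have h1 : |s| < (N s : ℝ) := by
        calc |s| ≤ (⌈|s|⌉₊ : ℝ) := Nat.le_ceil _
          _ < _ := by simp [hNdef]
      rw [abs_lt] at h1
      exact ⟨h1.1, h1.2⟩
    have hD : HasDerivAt (f (N s)) (F (f (N s) s)) s :=
      (hf (N s) s (Ioo_subset_Icc_self hsi)).hasDerivAt (Icc_mem_nhds hsi.1 hsi.2)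
    have hee : y =ᶠ[nhds s] f (N s) := by
      filter_upwards [Ioo_mem_nhds hsi.1 hsi.2] with t ht
      exact hcons (N s) t (Ioo_subset_Icc_self ht)
    have : HasDerivAt y (F (f (N s) s)) s := hD.congr_of_eventuallyEq hee
    rwa [← hcons (N s) s (Ioo_subset_Icc_self hsi)] at this

/-- Can't stay forever (for `s ≥ 0`) in the region `{u ≥ 1 + β v}`. -/
lemma stuck_false {a₁ a₂ β γ : ℝ} (ha₁ : 0 < a₁) (ha₂ : 0 < a₂) (hβ : 0 < β) (hγ : 0 < γ)
    (hbg : 1 ≤ β * γ)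
    {u v du dv : ℝ → ℝ}
    (hu : ∀ s, HasDerivAt u (du s) s) (hv : ∀ s, HasDerivAt v (dv s) s)
    (hupos : ∀ s, 0 < u s) (hvpos : ∀ s, 0 < v s)
    (hdu : ∀ s, du s = a₁ * (1 + u s ^ 2 + v s ^ 2)⁻¹ * u s * (1 - u s + β * v s))
    (hdv : ∀ s, dv s = a₂ * (1 + u s ^ 2 + v s ^ 2)⁻¹ * v s * (1 - v s + γ * u s))
    (hreg : ∀ s, 0 ≤ s → 1 + β * v s ≤ u s) : False := by
  have hden : ∀ s, (0:ℝ) < 1 + u s ^ 2 + v s ^ 2 := fun s => by positivity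
  have hdu_nonpos : ∀ s, 0 ≤ s → du s ≤ 0 := by
    intro s hs
    rw [hdu s]
    have h1 : 1 - u s + β * v s ≤ 0 := by linarith [hreg s hs]
    have h2 : 0 < a₁ * (1 + u s ^ 2 + v s ^ 2)⁻¹ * u s := by
      have := hden s
      have := hupos s
      positivity
    nlinarith
  have hanti : AntitoneOn u (Set.Ici (0:ℝ)) := by
    apply antitoneOn_of_hasDerivWithinAt_nonpos (convex_Ici 0)
      (fun s _ => (hu s).continuousAt.continuousWithinAt)
      (fun s _ => (hu s).hasDerivWithinAt)
    intro s hs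
    rw [interior_Ici] at hs
    exact hdu_nonpos s hs.le
  set M := u 0 with hM
  have hMpos : 0 < M := hupos 0
  have hub : ∀ s, 0 ≤ s → u s ≤ M := fun s hs => hanti Set.self_mem_Ici hs hs
  have hvb : ∀ s, 0 ≤ s → v s ≤ M / β := by
    intro s hs
    have h1 := hreg s hs
    have h2 := hub s hs
    rw [le_div_iff₀ hβ]
    nlinarith
  set D := 1 + M ^ 2 + (M / β) ^ 2 with hD
  have hDpos : 0 < D := by positivity
  set c := a₂ * D⁻¹ * (1 + γ) with hc
  have hcpos : 0 < c := by positivity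
  apply unbounded_of_deriv_ge_mul hcpos hv hvpos _ hvb
  intro s hs
  rw [hdv s]
  have h1 : 1 + γ ≤ 1 - v s + γ * u s := by
    have := hreg s hs
    have := hvpos s
    nlinarith
  have h2 : 1 + u s ^ 2 + v s ^ 2 ≤ D := by
    have h3 := hub s hs
    have h4 := hvb s hs
    have h5 := hupos s
    have h6 := hvpos s
    rw [hD]
    nlinarith
  have h7 : D⁻¹ ≤ (1 + u s ^ 2 + v s ^ 2)⁻¹ := by
    apply inv_anti₀ (hden s) h2
  have h8 := hvpos s
  have h9 := hden s
  rw [hc]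
  have h10 : 0 < (1 + u s ^ 2 + v s ^ 2)⁻¹ := inv_pos.mpr h9
  have h11 : 0 < D⁻¹ := inv_pos.mpr hDpos
  have h12 : D⁻¹ * (1 + γ) ≤ (1 + u s ^ 2 + v s ^ 2)⁻¹ * (1 - v s + γ * u s) :=
    mul_le_mul h7 h1 (by positivity) h10.le
  nlinarith [mul_le_mul_of_nonneg_left h12 (by positivity : (0:ℝ) ≤ a₂ * v s)]

/-- Boundary contradiction: solution cannot exit the open wedge through `{1 + β v = u}`. -/
lemma exit_contra {a₁ a₂ β γ : ℝ} (ha₁ : 0 < a₁) (ha₂ : 0 < a₂) (hβ : 0 < β)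
    {u v du dv : ℝ → ℝ}
    (hu : ∀ s, HasDerivAt u (du s) s) (hv : ∀ s, HasDerivAt v (dv s) s)
    (hupos : ∀ s, 0 < u s) (hvpos : ∀ s, 0 < v s)
    (hdu : ∀ s, du s = a₁ * (1 + u s ^ 2 + v s ^ 2)⁻¹ * u s * (1 - u s + β * v s))
    (hdv : ∀ s, dv s = a₂ * (1 + u s ^ 2 + v s ^ 2)⁻¹ * v s * (1 - v s + γ * u s))
    {s₀ s₁ : ℝ} (h01 : s₀ < s₁)
    (hP : ∀ s, s₀ ≤ s → s < s₁ → 0 < 1 + β * v s - u s)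
    (hP1 : 1 + β * v s₁ - u s₁ = 0) (hQ1 : 0 < 1 - v s₁ + γ * u s₁) : False := by
  have hden : (0:ℝ) < 1 + u s₁ ^ 2 + v s₁ ^ 2 := by positivity
  have hPd : HasDerivAt (fun s => 1 + β * v s - u s) (β * dv s₁ - du s₁) s₁ := by
    exact (((hv s₁).const_mul β).const_add 1).sub (hu s₁)
  have hle : β * dv s₁ - du s₁ ≤ 0 :=
    deriv_nonpos_boundary h01 hPd hP hP1
  have hdu1 : du s₁ = 0 := by
    rw [hdu s₁]
    have : 1 - u s₁ + β * v s₁ = 0 := by linarith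
    rw [this]
    ring
  have hdv1 : 0 < dv s₁ := by
    rw [hdv s₁]
    have := hvpos s₁
    positivity
  nlinarith

/-- Derivative of the inverse of a function with positive derivative. -/
lemma invFun_facts {τ lam : ℝ → ℝ} (hτ : ∀ s, HasDerivAt τ (lam s) s)
    (hpos : ∀ s, 0 < lam s) :
    StrictMono τ ∧ (∀ s, Function.invFun τ (τ s) = s) ∧
      (∀ s, HasDerivAt (Function.invFun τ) (lam s)⁻¹ (τ s)) := by
  have hmono : StrictMono τ := strictMono_of_deriv_pos fun s => by
    rw [(hτ s).deriv]; exact hpos s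
  have hcont : Continuous τ := continuous_iff_continuousAt.mpr fun s => (hτ s).continuousAt
  have hleft : ∀ s, Function.invFun τ (τ s) = s :=
    Function.leftInverse_invFun hmono.injective
  refine ⟨hmono, hleft, fun s => ?_⟩
  set σ := Function.invFun τ with hσdef
  have hU : Ioo (τ (s-1)) (τ (s+1)) ⊆ τ '' (Ioo (s-1) (s+1)) :=
    intermediate_value_Ioo (by linarith) hcont.continuousOn
  have hUnhds : Ioo (τ (s-1)) (τ (s+1)) ∈ nhds (τ s) :=
    Ioo_mem_nhds (hmono (by linarith)) (hmono (by linarith))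
  have hσc : ContinuousAt σ (τ s) := by
    apply continuousAt_of_monotoneOn_of_image_mem_nhds (s := Ioo (τ (s-1)) (τ (s+1)))
    · intro t₁ h₁ t₂ h₂ h12
      obtain ⟨w₁, _, rfl⟩ := hU h₁
      obtain ⟨w₂, _, rfl⟩ := hU h₂
      rw [hleft, hleft]
      exact (hmono.le_iff_le).mp h12
    · exact hUnhds
    · apply mem_of_superset (by rw [hleft]; exact Ioo_mem_nhds (by linarith) (by linarith) :
        Ioo (s-1) (s+1) ∈ nhds (σ (τ s)))
      intro w hw
      exact ⟨τ w, ⟨hmono hw.1, hmono hw.2⟩, hleft w⟩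
  have hev : ∀ᶠ t in nhds (τ s), τ (σ t) = t := by
    filter_upwards [hUnhds] with t ht
    obtain ⟨w, _, rfl⟩ := hU ht
    rw [hleft]
  have hd : HasDerivAt τ (lam s) (σ (τ s)) := by rw [hleft]; exact hτ s
  exact HasDerivAt.of_local_left_inverse hσc hd (ne_of_gt (hpos s)) hev

/-- If the trajectory always lies in `{P ≤ 0} ∪ {Q ≤ 0}`, never in both, and starts
in `{P ≤ 0}`, it stays in `{P ≤ 0}`. -/
lemma stay_nonpos {P Q : ℝ → ℝ} (hPc : Continuous P) (hQc : Continuous Q)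
    (hns' : ∀ s, 0 ≤ s → P s ≤ 0 → Q s ≤ 0 → False)
    (hcover : ∀ s, 0 ≤ s → P s ≤ 0 ∨ Q s ≤ 0)
    (h0 : P 0 ≤ 0) : ∀ s, 0 ≤ s → P s ≤ 0 := by
  by_contra hcon
  push_neg at hcon
  obtain ⟨s₁, hs₁0, hs₁⟩ := hcon
  have hs₁pos : 0 < s₁ := by
    rcases eq_or_lt_of_le hs₁0 with rfl | h
    · linarith
    · exact h
  set S : Set ℝ := {s | s ∈ Icc 0 s₁ ∧ P s ≤ 0} with hSdef
  have hSne : S.Nonempty := ⟨0, ⟨le_rfl, hs₁pos.le⟩, h0⟩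
  have hSbdd : BddAbove S := ⟨s₁, fun s hs => hs.1.2⟩
  have hSclosed : IsClosed S := by
    have : S = Icc 0 s₁ ∩ P ⁻¹' (Set.Iic 0) := by
      ext s; simp only [hSdef, Set.mem_setOf_eq, Set.mem_inter_iff, Set.mem_preimage,
        Set.mem_Iic]
    rw [this]
    exact isClosed_Icc.inter (isClosed_Iic.preimage hPc)
  set s₂ := sSup S with hs₂def
  have hs₂S : s₂ ∈ S := hSclosed.csSup_mem hSne hSbdd
  have hs₂lt : s₂ < s₁ := by
    rcases eq_or_lt_of_le hs₂S.1.2 with h | h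
    · exfalso; rw [← h] at hs₁; linarith [hs₂S.2]
    · exact h
  have hPpos : ∀ s, s₂ < s → s ≤ s₁ → 0 < P s := by
    intro s h1 h2
    by_contra h3
    push_neg at h3
    have : s ∈ S := ⟨⟨le_trans hs₂S.1.1 (le_of_lt h1), h2⟩, h3⟩
    have := le_csSup hSbdd this
    linarith
  have hQn : ∀ s, s₂ < s → s ≤ s₁ → Q s ≤ 0 := by
    intro s h1 h2
    rcases hcover s (le_trans hs₂S.1.1 h1.le) with h | h
    · exfalso; linarith [hPpos s h1 h2]
    · exact h
  have hQs₂ : Q s₂ ≤ 0 := by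
    have htd : Tendsto Q (nhdsWithin s₂ (Set.Ioi s₂)) (nhds (Q s₂)) :=
      (hQc.continuousAt).continuousWithinAt
    refine le_of_tendsto htd ?_
    filter_upwards [Ioc_mem_nhdsGT_of_mem (Set.mem_Ico.mpr ⟨le_rfl, hs₂lt⟩)] with s hs
    exact hQn s hs.1 hs.2
  exact hns' s₂ hs₂S.1.1 hs₂S.2 hQs₂
section Wedge

variable {a₁ a₂ β γ : ℝ} {u v du dv : ℝ → ℝ}

/-- The trajectory eventually enters the wedge `{1 + βv - u > 0} ∩ {1 + γu - v > 0}`. -/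
lemma wedge_entry (ha₁ : 0 < a₁) (ha₂ : 0 < a₂) (hβ : 0 < β) (hγ : 0 < γ) (hbg : 1 ≤ β * γ)
    (hu : ∀ s, HasDerivAt u (du s) s) (hv : ∀ s, HasDerivAt v (dv s) s)
    (hupos : ∀ s, 0 < u s) (hvpos : ∀ s, 0 < v s)
    (hdu : ∀ s, du s = a₁ * (1 + u s ^ 2 + v s ^ 2)⁻¹ * u s * (1 - u s + β * v s))
    (hdv : ∀ s, dv s = a₂ * (1 + u s ^ 2 + v s ^ 2)⁻¹ * v s * (1 - v s + γ * u s)) :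
    ∃ s₀, 0 ≤ s₀ ∧ 0 < 1 + β * v s₀ - u s₀ ∧ 0 < 1 + γ * u s₀ - v s₀ := by
  have hucont : Continuous u := continuous_iff_continuousAt.2 fun s => (hu s).continuousAt
  have hvcont : Continuous v := continuous_iff_continuousAt.2 fun s => (hv s).continuousAt
  have hPc : Continuous (fun s => 1 + β * v s - u s) :=
    (continuous_const.add (continuous_const.mul hvcont)).sub hucont
  have hQc : Continuous (fun s => 1 + γ * u s - v s) :=
    (continuous_const.add (continuous_const.mul hucont)).sub hvcont
  have hns : ∀ s, 1 + β * v s - u s ≤ 0 → 1 + γ * u s - v s ≤ 0 → False := by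
    intro s h1 h2
    nlinarith [hupos s, hvpos s]
  by_contra hcon
  push_neg at hcon
  have hcover : ∀ s, 0 ≤ s → 1 + β * v s - u s ≤ 0 ∨ 1 + γ * u s - v s ≤ 0 := by
    intro s hs
    rcases le_or_gt (1 + β * v s - u s) 0 with h | h
    · exact Or.inl h
    · exact Or.inr (hcon s hs h)
  rcases le_or_gt (1 + β * v 0 - u 0) 0 with h0 | h0
  · have hstay := stay_nonpos hPc hQc (fun s _ h1 h2 => hns s h1 h2) hcover h0
    exact stuck_false ha₁ ha₂ hβ hγ hbg hu hv hupos hvpos hdu hdv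
      (fun s hs => by linarith [hstay s hs])
  · have h0' : 1 + γ * u 0 - v 0 ≤ 0 := by
      rcases hcover 0 le_rfl with h | h
      · linarith
      · exact h
    have hstay := stay_nonpos hQc hPc (fun s hs h1 h2 => hns s h2 h1)
      (fun s hs => (hcover s hs).symm) h0'
    have hdv' : ∀ s, dv s = a₂ * (1 + v s ^ 2 + u s ^ 2)⁻¹ * v s * (1 - v s + γ * u s) := by
      intro s
      rw [hdv s, show (1:ℝ) + u s ^ 2 + v s ^ 2 = 1 + v s ^ 2 + u s ^ 2 by ring]
    have hdu' : ∀ s, du s = a₁ * (1 + v s ^ 2 + u s ^ 2)⁻¹ * u s * (1 - u s + β * v s) := by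
      intro s
      rw [hdu s, show (1:ℝ) + u s ^ 2 + v s ^ 2 = 1 + v s ^ 2 + u s ^ 2 by ring]
    exact stuck_false ha₂ ha₁ hγ hβ (by rw [mul_comm]; exact hbg) hv hu hvpos hupos
      hdv' hdu' (fun s hs => by linarith [hstay s hs])

/-- Forward invariance of the open wedge. -/
lemma wedge_invariant (ha₁ : 0 < a₁) (ha₂ : 0 < a₂) (hβ : 0 < β) (hγ : 0 < γ) (hbg : 1 ≤ β * γ)
    (hu : ∀ s, HasDerivAt u (du s) s) (hv : ∀ s, HasDerivAt v (dv s) s)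
    (hupos : ∀ s, 0 < u s) (hvpos : ∀ s, 0 < v s)
    (hdu : ∀ s, du s = a₁ * (1 + u s ^ 2 + v s ^ 2)⁻¹ * u s * (1 - u s + β * v s))
    (hdv : ∀ s, dv s = a₂ * (1 + u s ^ 2 + v s ^ 2)⁻¹ * v s * (1 - v s + γ * u s))
    {s₀ : ℝ} (hP0 : 0 < 1 + β * v s₀ - u s₀) (hQ0 : 0 < 1 + γ * u s₀ - v s₀) :
    ∀ s, s₀ ≤ s → 0 < 1 + β * v s - u s ∧ 0 < 1 + γ * u s - v s := by
  have hucont : Continuous u := continuous_iff_continuousAt.2 fun s => (hu s).continuousAt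
  have hvcont : Continuous v := continuous_iff_continuousAt.2 fun s => (hv s).continuousAt
  have hPc : Continuous (fun s => 1 + β * v s - u s) :=
    (continuous_const.add (continuous_const.mul hvcont)).sub hucont
  have hQc : Continuous (fun s => 1 + γ * u s - v s) :=
    (continuous_const.add (continuous_const.mul hucont)).sub hvcont
  have hns : ∀ s, 1 + β * v s - u s ≤ 0 → 1 + γ * u s - v s ≤ 0 → False := by
    intro s h1 h2
    nlinarith [hupos s, hvpos s]
  by_contra hcon
  push_neg at hcon
  obtain ⟨sb, hsb, hbad⟩ := hcon
  set S : Set ℝ := {s | s₀ ≤ s ∧ (1 + β * v s - u s ≤ 0 ∨ 1 + γ * u s - v s ≤ 0)} with hSdef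
  have hSne : S.Nonempty := by
    refine ⟨sb, hsb, ?_⟩
    rcases le_or_gt (1 + β * v sb - u sb) 0 with h | h
    · exact Or.inl h
    · exact Or.inr (hbad h)
  have hSclosed : IsClosed S := by
    have : S = Set.Ici s₀ ∩ ((fun s => 1 + β * v s - u s) ⁻¹' Set.Iic 0 ∪
        (fun s => 1 + γ * u s - v s) ⁻¹' Set.Iic 0) := by
      ext s
      simp [hSdef]
    rw [this]
    exact isClosed_Ici.inter ((isClosed_Iic.preimage hPc).union (isClosed_Iic.preimage hQc))
  have hSbdd : BddBelow S := ⟨s₀, fun s hs => hs.1⟩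
  set s₁ := sInf S with hs₁def
  have hs₁S : s₁ ∈ S := hSclosed.csInf_mem hSne hSbdd
  have hs₀s₁ : s₀ < s₁ := by
    rcases eq_or_lt_of_le hs₁S.1 with h | h
    · exfalso
      rcases hs₁S.2 with h2 | h2 <;> rw [← h] at h2 <;> linarith
    · exact h
  have hgood : ∀ s, s₀ ≤ s → s < s₁ → 0 < 1 + β * v s - u s ∧ 0 < 1 + γ * u s - v s := by
    intro s h1 h2
    by_contra h
    have hmem : s ∈ S := by
      refine ⟨h1, ?_⟩
      by_contra h'
      push_neg at h'
      exact h ⟨h'.1, h'.2⟩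
    linarith [csInf_le hSbdd hmem]
  -- left limits: P s₁ ≥ 0 and Q s₁ ≥ 0
  have hlim : ∀ {f : ℝ → ℝ}, Continuous f → (∀ s, s₀ ≤ s → s < s₁ → 0 < f s) → 0 ≤ f s₁ := by
    intro f hf hpos
    have htd : Filter.Tendsto f (nhdsWithin s₁ (Set.Iio s₁)) (nhds (f s₁)) :=
      (hf.continuousAt).continuousWithinAt
    refine ge_of_tendsto htd ?_
    filter_upwards [Ioo_mem_nhdsLT_of_mem (Set.mem_Ioc.mpr ⟨hs₀s₁, le_rfl⟩)] with s hs
    exact (hpos s hs.1.le hs.2).le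
  have hP1 : 0 ≤ 1 + β * v s₁ - u s₁ := hlim hPc (fun s h1 h2 => (hgood s h1 h2).1)
  have hQ1 : 0 ≤ 1 + γ * u s₁ - v s₁ := hlim hQc (fun s h1 h2 => (hgood s h1 h2).2)
  rcases hs₁S.2 with hc | hc
  · -- P s₁ = 0
    have hPz : 1 + β * v s₁ - u s₁ = 0 := le_antisymm hc hP1
    rcases eq_or_lt_of_le hQ1 with hQz | hQpos
    · exact hns s₁ hPz.le (by linarith)
    · exact exit_contra ha₁ ha₂ hβ hu hv hupos hvpos hdu hdv hs₀s₁
        (fun s h1 h2 => (hgood s h1 h2).1) hPz (by linarith)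
  · -- Q s₁ = 0
    have hQz : 1 + γ * u s₁ - v s₁ = 0 := le_antisymm hc hQ1
    rcases eq_or_lt_of_le hP1 with hPz | hPpos
    · exact hns s₁ (by linarith) hQz.le
    · have hdv' : ∀ s, dv s = a₂ * (1 + v s ^ 2 + u s ^ 2)⁻¹ * v s * (1 - v s + γ * u s) := by
        intro s
        rw [hdv s, show (1:ℝ) + u s ^ 2 + v s ^ 2 = 1 + v s ^ 2 + u s ^ 2 by ring]
      have hdu' : ∀ s, du s = a₁ * (1 + v s ^ 2 + u s ^ 2)⁻¹ * u s * (1 - u s + β * v s) := by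
        intro s
        rw [hdu s, show (1:ℝ) + u s ^ 2 + v s ^ 2 = 1 + v s ^ 2 + u s ^ 2 by ring]
      exact exit_contra ha₂ ha₁ hγ hv hu hvpos hupos hdv' hdu' hs₀s₁
        (fun s h1 h2 => (hgood s h1 h2).2) hQz (by linarith)

end Wedge
section Limits

variable {a₁ a₂ β γ : ℝ} {u v du dv : ℝ → ℝ}

/-- Inside the invariant wedge both components tend to infinity. -/
lemma tendsto_both (ha₁ : 0 < a₁) (ha₂ : 0 < a₂) (hβ : 0 < β) (hγ : 0 < γ) (hbg : 1 < β * γ)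
    (hu : ∀ s, HasDerivAt u (du s) s) (hv : ∀ s, HasDerivAt v (dv s) s)
    (hupos : ∀ s, 0 < u s) (hvpos : ∀ s, 0 < v s)
    (hdu : ∀ s, du s = a₁ * (1 + u s ^ 2 + v s ^ 2)⁻¹ * u s * (1 - u s + β * v s))
    (hdv : ∀ s, dv s = a₂ * (1 + u s ^ 2 + v s ^ 2)⁻¹ * v s * (1 - v s + γ * u s))
    {s₀ : ℝ}
    (hW : ∀ s, s₀ ≤ s → 0 < 1 + β * v s - u s ∧ 0 < 1 + γ * u s - v s) :
    Filter.Tendsto u Filter.atTop Filter.atTop ∧ Filter.Tendsto v Filter.atTop Filter.atTop := by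
  have hden : ∀ s, (0:ℝ) < 1 + u s ^ 2 + v s ^ 2 := fun s => by positivity
  -- monotonicity on [s₀, ∞)
  have humono : MonotoneOn u (Set.Ici s₀) := by
    apply monotoneOn_of_hasDerivWithinAt_nonneg (convex_Ici s₀)
      (fun s _ => (hu s).continuousAt.continuousWithinAt)
      (fun s _ => (hu s).hasDerivWithinAt)
    intro s hs
    rw [interior_Ici] at hs
    rw [hdu s]
    have h1 := (hW s hs.le).1
    have := hden s
    have := hupos s
    have : 0 < 1 - u s + β * v s := by linarith
    positivity
  have hvmono : MonotoneOn v (Set.Ici s₀) := by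
    apply monotoneOn_of_hasDerivWithinAt_nonneg (convex_Ici s₀)
      (fun s _ => (hv s).continuousAt.continuousWithinAt)
      (fun s _ => (hv s).hasDerivWithinAt)
    intro s hs
    rw [interior_Ici] at hs
    rw [hdv s]
    have h1 := (hW s hs.le).2
    have := hden s
    have := hvpos s
    have : 0 < 1 - v s + γ * u s := by linarith
    positivity
  -- globalized monotone versions
  have hgu : Monotone (fun s => u (max s s₀)) := by
    intro s t hst
    exact humono (Set.mem_Ici.mpr (le_max_right _ _)) (Set.mem_Ici.mpr (le_max_right _ _))
      (max_le_max hst le_rfl)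
  have hgv : Monotone (fun s => v (max s s₀)) := by
    intro s t hst
    exact hvmono (Set.mem_Ici.mpr (le_max_right _ _)) (Set.mem_Ici.mpr (le_max_right _ _))
      (max_le_max hst le_rfl)
  have heq : (fun s => u (max s s₀)) =ᶠ[Filter.atTop] u := by
    filter_upwards [Filter.eventually_ge_atTop s₀] with s hs
    rw [max_eq_left hs]
  have heqv : (fun s => v (max s s₀)) =ᶠ[Filter.atTop] v := by
    filter_upwards [Filter.eventually_ge_atTop s₀] with s hs
    rw [max_eq_left hs]
  -- if u has a finite limit then u ≤ a on [s₀,∞)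
  rcases tendsto_of_monotone hgu with hU | ⟨a, ha⟩
  · rcases tendsto_of_monotone hgv with hV | ⟨b, hb⟩
    · exact ⟨hU.congr' heq, hV.congr' heqv⟩
    · -- u → ∞, v → b : contradiction with wedge (u < 1 + β v ≤ 1 + β b)
      exfalso
      have hvle : ∀ s, s₀ ≤ s → v s ≤ b := by
        intro s hs
        have := hgv.ge_of_tendsto hb s
        rwa [max_eq_left hs] at this
      have hub : ∀ s, s₀ ≤ s → u s < 1 + β * b := by
        intro s hs
        have h1 := (hW s hs).1
        have h2 := hvle s hs
        nlinarith
      obtain ⟨s, hs1, hs2⟩ := ((Filter.tendsto_atTop.mp (hU.congr' heq) (1 + β * b)).and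
        (Filter.eventually_ge_atTop s₀)).exists
      linarith [hub s hs2]
  · -- u → a
    exfalso
    have hule : ∀ s, s₀ ≤ s → u s ≤ a := by
      intro s hs
      have := hgu.ge_of_tendsto ha s
      rwa [max_eq_left hs] at this
    have hapos : 0 < a := lt_of_lt_of_le (hupos s₀) (hule s₀ le_rfl)
    rcases tendsto_of_monotone hgv with hV | ⟨b, hb⟩
    · have hvb : ∀ s, s₀ ≤ s → v s < 1 + γ * a := by
        intro s hs
        have h1 := (hW s hs).2
        have h2 := hule s hs
        nlinarith
      obtain ⟨s, hs1, hs2⟩ := ((Filter.tendsto_atTop.mp (hV.congr' heqv) (1 + γ * a)).and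
        (Filter.eventually_ge_atTop s₀)).exists
      linarith [hvb s hs2]
    · -- both converge: limit is an interior equilibrium, impossible
      have hua : Filter.Tendsto u Filter.atTop (nhds a) := ha.congr' heq
      have hvb : Filter.Tendsto v Filter.atTop (nhds b) := hb.congr' heqv
      have hvle : ∀ s, s₀ ≤ s → v s ≤ b := by
        intro s hs
        have := hgv.ge_of_tendsto hb s
        rwa [max_eq_left hs] at this
      have hbpos : 0 < b := lt_of_lt_of_le (hvpos s₀) (hvle s₀ le_rfl)
      -- limits of the derivatives are zero, so (a,b) is an equilibrium
      have hden' : (0:ℝ) < 1 + a ^ 2 + b ^ 2 := by positivity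
      have hinv : Filter.Tendsto (fun s => (1 + u s ^ 2 + v s ^ 2)⁻¹) Filter.atTop
          (nhds ((1 + a ^ 2 + b ^ 2)⁻¹)) :=
        ((tendsto_const_nhds.add (hua.pow 2)).add (hvb.pow 2)).inv₀ (ne_of_gt hden')
      have hdul : Filter.Tendsto du Filter.atTop
          (nhds (a₁ * (1 + a ^ 2 + b ^ 2)⁻¹ * a * (1 - a + β * b))) := by
        apply Filter.Tendsto.congr (fun s => (hdu s).symm)
        exact ((((tendsto_const_nhds (x := a₁)).mul hinv).mul hua).mul
          ((tendsto_const_nhds.sub hua).add ((tendsto_const_nhds (x := β)).mul hvb)))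
      have hdvl : Filter.Tendsto dv Filter.atTop
          (nhds (a₂ * (1 + a ^ 2 + b ^ 2)⁻¹ * b * (1 - b + γ * a))) := by
        apply Filter.Tendsto.congr (fun s => (hdv s).symm)
        exact ((((tendsto_const_nhds (x := a₂)).mul hinv).mul hvb).mul
          ((tendsto_const_nhds.sub hvb).add ((tendsto_const_nhds (x := γ)).mul hua)))
      have hz1 := limit_deriv_zero hu hua hdul
      have hz2 := limit_deriv_zero hv hvb hdvl
      have hfac : (0:ℝ) < (1 + a ^ 2 + b ^ 2)⁻¹ := inv_pos.mpr hden'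
      have h1 : 1 - a + β * b = 0 := by
        rcases mul_eq_zero.mp hz1 with h | h
        · exact absurd h (ne_of_gt (mul_pos (mul_pos ha₁ hfac) hapos))
        · exact h
      have h2 : 1 - b + γ * a = 0 := by
        rcases mul_eq_zero.mp hz2 with h | h
        · exact absurd h (ne_of_gt (mul_pos (mul_pos ha₂ hfac) hbpos))
        · exact h
      nlinarith

end Limits

end LV2Aux

open Set Metric intervalIntegral Real

/-- The planar generalised Lotka–Volterra vector field
`ẋ₁ = α₁ x₁ (1 − x₁ + β₁ x₂)`, `ẋ₂ = α₂ x₂ (1 − x₂ + γ₂ x₁)`. -/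
def lv2 (α₁ α₂ β₁ γ₂ : ℝ) : ℝ × ℝ → ℝ × ℝ := fun x =>
  (α₁ * x.1 * (1 - x.1 + β₁ * x.2), α₂ * x.2 * (1 - x.2 + γ₂ * x.1))

/-- (Case (d) of the planar LV theorem.)  If `α₁, α₂ > 0`, `1 + β₁ > 0`,
`1 + γ₂ > 0` and `β₁ γ₂ > 1`, then (i) the only equilibria in the closed quadrant are
`(0,0)`, `ξ₁ = (1,0)` and `ξ₂ = (0,1)`; and (ii) for every `x₀` in the open positive
quadrant the maximal solution through `x₀` stays in the open quadrant and both components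
tend to `+∞` at the right endpoint of its maximal interval of existence (either `+∞`, or a
finite blow-up time `T`). -/
theorem lv2_case_d
    (α₁ α₂ β₁ γ₂ : ℝ) (hα₁ : 0 < α₁) (hα₂ : 0 < α₂)
    (hβ : 0 < 1 + β₁) (hγ : 0 < 1 + γ₂) (hbg : 1 < β₁ * γ₂) :
    (∀ p : ℝ × ℝ, 0 ≤ p.1 → 0 ≤ p.2 → lv2 α₁ α₂ β₁ γ₂ p = 0 →
      p = ((0 : ℝ), (0 : ℝ)) ∨ p = ((1 : ℝ), (0 : ℝ)) ∨ p = ((0 : ℝ), (1 : ℝ))) ∧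
    (∀ x₀ : ℝ × ℝ, 0 < x₀.1 → 0 < x₀.2 →
      ∃ x : ℝ → ℝ × ℝ, x 0 = x₀ ∧
        (((∀ τ : ℝ, 0 ≤ τ → HasDerivAt x (lv2 α₁ α₂ β₁ γ₂ (x τ)) τ) ∧
          (∀ τ : ℝ, 0 ≤ τ → 0 < (x τ).1 ∧ 0 < (x τ).2) ∧
          Tendsto (fun τ => (x τ).1) atTop atTop ∧
          Tendsto (fun τ => (x τ).2) atTop atTop) ∨
         (∃ T : ℝ, 0 < T ∧
          (∀ τ : ℝ, 0 ≤ τ → τ < T → HasDerivAt x (lv2 α₁ α₂ β₁ γ₂ (x τ)) τ) ∧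
          (∀ τ : ℝ, 0 ≤ τ → τ < T → 0 < (x τ).1 ∧ 0 < (x τ).2) ∧
          Tendsto (fun τ => (x τ).1) (nhdsWithin T (Set.Iio T)) atTop ∧
          Tendsto (fun τ => (x τ).2) (nhdsWithin T (Set.Iio T)) atTop))) := by
  have hβ1 : 0 < β₁ := by
    rcases lt_trichotomy β₁ 0 with h | h | h
    · exfalso
      have hγneg : γ₂ < 0 := by
        by_contra hg
        push_neg at hg
        nlinarith
      nlinarith [mul_pos hβ (neg_pos.mpr hγneg)]
    · exfalso; rw [h] at hbg; simp at hbg; linarith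
    · exact h
  have hγ1 : 0 < γ₂ := by
    by_contra hg
    push_neg at hg
    nlinarith [mul_nonpos_of_nonneg_of_nonpos hβ1.le hg]
  constructor
  · rintro ⟨p₁, p₂⟩ hp1 hp2 heq
    have h1 : α₁ * p₁ * (1 - p₁ + β₁ * p₂) = 0 := by
      have := congrArg Prod.fst heq
      simpa [lv2] using this
    have h2 : α₂ * p₂ * (1 - p₂ + γ₂ * p₁) = 0 := by
      have := congrArg Prod.snd heq
      simpa [lv2] using this
    have hp1' : p₁ = 0 ∨ 1 - p₁ + β₁ * p₂ = 0 := by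
      rcases mul_eq_zero.mp h1 with h | h
      · left
        rcases mul_eq_zero.mp h with h' | h'
        · exact absurd h' (ne_of_gt hα₁)
        · exact h'
      · right; exact h
    have hp2' : p₂ = 0 ∨ 1 - p₂ + γ₂ * p₁ = 0 := by
      rcases mul_eq_zero.mp h2 with h | h
      · left
        rcases mul_eq_zero.mp h with h' | h'
        · exact absurd h' (ne_of_gt hα₂)
        · exact h'
      · right; exact h
    rcases hp1' with h1' | h1' <;> rcases hp2' with h2' | h2'
    · left; rw [h1', h2']
    · right; right
      have : p₂ = 1 := by rw [h1'] at h2'; linarith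
      rw [h1', this]
    · right; left
      have : p₁ = 1 := by rw [h2'] at h1'; linarith
      rw [h2', this]
    · exfalso
      have h3 : γ₂ * (1 - p₁ + β₁ * p₂) = 0 := by rw [h1']; ring
      nlinarith [mul_nonneg hp2 (le_of_lt (by linarith : (0:ℝ) < β₁ * γ₂ - 1))]
  · intro x₀ h01 h02
    classical
    set F : ℝ × ℝ → ℝ × ℝ :=
      fun p => (1 + p.1 ^ 2 + p.2 ^ 2)⁻¹ • lv2 α₁ α₂ β₁ γ₂ p with hFdef
    have hdenc : ContDiff ℝ 1 (fun p : ℝ × ℝ => 1 + p.1 ^ 2 + p.2 ^ 2) :=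
      (contDiff_const.add (contDiff_fst.pow 2)).add (contDiff_snd.pow 2)
    have hlv2c : ContDiff ℝ 1 (lv2 α₁ α₂ β₁ γ₂) := by
      show ContDiff ℝ 1 fun x : ℝ × ℝ =>
        (α₁ * x.1 * (1 - x.1 + β₁ * x.2), α₂ * x.2 * (1 - x.2 + γ₂ * x.1))
      apply ContDiff.prodMk
      · exact (contDiff_const.mul contDiff_fst).mul
          ((contDiff_const.sub contDiff_fst).add (contDiff_const.mul contDiff_snd))
      · exact (contDiff_const.mul contDiff_snd).mul
          ((contDiff_const.sub contDiff_snd).add (contDiff_const.mul contDiff_fst))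
    have hFc : ContDiff ℝ 1 F :=
      (hdenc.inv (fun p => by positivity)).smul hlv2c
    have hFb : ∀ p, ‖F p‖ ≤ α₁ * (2 + β₁) + α₂ * (2 + γ₂) := by
      intro p
      have hden : (0:ℝ) < 1 + p.1 ^ 2 + p.2 ^ 2 := by positivity
      have hinvpos : (0:ℝ) < (1 + p.1 ^ 2 + p.2 ^ 2)⁻¹ := inv_pos.mpr hden
      have key1 : |α₁ * p.1 * (1 - p.1 + β₁ * p.2)| ≤
          α₁ * (2 + β₁) * (1 + p.1 ^ 2 + p.2 ^ 2) := by
        rw [abs_le]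
        constructor <;> nlinarith [sq_nonneg (p.1 - 1), sq_nonneg (p.1 + 1),
          sq_nonneg (p.1 - p.2), sq_nonneg (p.1 + p.2), sq_nonneg p.1, sq_nonneg p.2,
          mul_pos hα₁ hβ1, hα₁.le, hβ1.le]
      have key2 : |α₂ * p.2 * (1 - p.2 + γ₂ * p.1)| ≤
          α₂ * (2 + γ₂) * (1 + p.1 ^ 2 + p.2 ^ 2) := by
        rw [abs_le]
        constructor <;> nlinarith [sq_nonneg (p.2 - 1), sq_nonneg (p.2 + 1),
          sq_nonneg (p.1 - p.2), sq_nonneg (p.1 + p.2), sq_nonneg p.1, sq_nonneg p.2,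
          mul_pos hα₂ hγ1, hα₂.le, hγ1.le]
      have hmul : (1 + p.1 ^ 2 + p.2 ^ 2)⁻¹ * (1 + p.1 ^ 2 + p.2 ^ 2) = 1 :=
        inv_mul_cancel₀ (ne_of_gt hden)
      have hc1 : |(F p).1| ≤ α₁ * (2 + β₁) := by
        have h1 : (F p).1 = (1 + p.1 ^ 2 + p.2 ^ 2)⁻¹ * (α₁ * p.1 * (1 - p.1 + β₁ * p.2)) := by
          simp [hFdef, lv2]
        rw [h1, abs_mul, abs_of_pos hinvpos]
        calc (1 + p.1 ^ 2 + p.2 ^ 2)⁻¹ * |α₁ * p.1 * (1 - p.1 + β₁ * p.2)|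
            ≤ (1 + p.1 ^ 2 + p.2 ^ 2)⁻¹ * (α₁ * (2 + β₁) * (1 + p.1 ^ 2 + p.2 ^ 2)) :=
              mul_le_mul_of_nonneg_left key1 hinvpos.le
          _ = α₁ * (2 + β₁) := by field_simp
      have hc2 : |(F p).2| ≤ α₂ * (2 + γ₂) := by
        have h1 : (F p).2 = (1 + p.1 ^ 2 + p.2 ^ 2)⁻¹ * (α₂ * p.2 * (1 - p.2 + γ₂ * p.1)) := by
          simp [hFdef, lv2]
        rw [h1, abs_mul, abs_of_pos hinvpos]
        calc (1 + p.1 ^ 2 + p.2 ^ 2)⁻¹ * |α₂ * p.2 * (1 - p.2 + γ₂ * p.1)|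
            ≤ (1 + p.1 ^ 2 + p.2 ^ 2)⁻¹ * (α₂ * (2 + γ₂) * (1 + p.1 ^ 2 + p.2 ^ 2)) :=
              mul_le_mul_of_nonneg_left key2 hinvpos.le
          _ = α₂ * (2 + γ₂) := by field_simp
      rw [Prod.norm_def]
      apply max_le
      · rw [Real.norm_eq_abs]
        have : (0:ℝ) < α₂ * (2 + γ₂) := by positivity
        linarith [hc1]
      · rw [Real.norm_eq_abs]
        have : (0:ℝ) < α₁ * (2 + β₁) := by positivity
        linarith [hc2]
    obtain ⟨y, hy0, hy⟩ := global_solution F hFc _ hFb x₀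
    set u : ℝ → ℝ := fun s => (y s).1 with hudef
    set v : ℝ → ℝ := fun s => (y s).2 with hvdef
    have hF1 : ∀ s, (F (y s)).1 =
        α₁ * (1 + u s ^ 2 + v s ^ 2)⁻¹ * u s * (1 - u s + β₁ * v s) := by
      intro s
      simp only [hFdef, hudef, hvdef, lv2, Prod.smul_fst, smul_eq_mul]
      ring
    have hF2 : ∀ s, (F (y s)).2 =
        α₂ * (1 + u s ^ 2 + v s ^ 2)⁻¹ * v s * (1 - v s + γ₂ * u s) := by
      intro s
      simp only [hFdef, hudef, hvdef, lv2, Prod.smul_snd, smul_eq_mul]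
      ring
    have hud : ∀ s, HasDerivAt u
        (α₁ * (1 + u s ^ 2 + v s ^ 2)⁻¹ * u s * (1 - u s + β₁ * v s)) s :=
      fun s => hF1 s ▸ (hy s).fst'
    have hvd : ∀ s, HasDerivAt v
        (α₂ * (1 + u s ^ 2 + v s ^ 2)⁻¹ * v s * (1 - v s + γ₂ * u s)) s :=
      fun s => hF2 s ▸ (hy s).snd'
    have hucont : Continuous u := continuous_iff_continuousAt.2 fun s => (hud s).continuousAt
    have hvcont : Continuous v := continuous_iff_continuousAt.2 fun s => (hvd s).continuousAt
    have hinvc : Continuous (fun s => ((1:ℝ) + u s ^ 2 + v s ^ 2)⁻¹) :=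
      ((continuous_const.add (hucont.pow 2)).add (hvcont.pow 2)).inv₀ (fun s => by simp only [Pi.add_apply, Pi.pow_apply]; positivity)
    have hupos : ∀ s, 0 < u s := by
      apply pos_of_deriv_mul
        (g := fun s => α₁ * (1 + u s ^ 2 + v s ^ 2)⁻¹ * (1 - u s + β₁ * v s))
      · exact (continuous_const.mul hinvc).mul
          ((continuous_const.sub hucont).add (continuous_const.mul hvcont))
      · intro s
        convert hud s using 1
        ring
      · show 0 < (y 0).1
        rw [hy0]; exact h01
    have hvpos : ∀ s, 0 < v s := by
      apply pos_of_deriv_mul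
        (g := fun s => α₂ * (1 + u s ^ 2 + v s ^ 2)⁻¹ * (1 - v s + γ₂ * u s))
      · exact (continuous_const.mul hinvc).mul
          ((continuous_const.sub hvcont).add (continuous_const.mul hucont))
      · intro s
        convert hvd s using 1
        ring
      · show 0 < (y 0).2
        rw [hy0]; exact h02
    obtain ⟨s₀, hs₀0, hP0, hQ0⟩ := wedge_entry hα₁ hα₂ hβ1 hγ1 hbg.le hud hvd hupos hvpos
      (fun s => rfl) (fun s => rfl)
    have hW := wedge_invariant hα₁ hα₂ hβ1 hγ1 hbg.le hud hvd hupos hvpos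
      (fun s => rfl) (fun s => rfl) hP0 hQ0
    obtain ⟨hUtop, hVtop⟩ := tendsto_both hα₁ hα₂ hβ1 hγ1 hbg hud hvd hupos hvpos
      (fun s => rfl) (fun s => rfl) hW
    -- time change
    set lamy : ℝ → ℝ := fun s => ((1:ℝ) + u s ^ 2 + v s ^ 2)⁻¹ with hlamydef
    have hlamyc : Continuous lamy := hinvc
    have hlamypos : ∀ s, 0 < lamy s := fun s => by
      show (0:ℝ) < ((1:ℝ) + u s ^ 2 + v s ^ 2)⁻¹
      positivity
    set τf : ℝ → ℝ := fun r => ∫ t in (0:ℝ)..r, lamy t with hτfdef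
    have hτd : ∀ s, HasDerivAt τf (lamy s) s :=
      fun s => (hlamyc.integral_hasStrictDerivAt 0 s).hasDerivAt
    obtain ⟨hτmono, hleft, hσd⟩ := invFun_facts hτd hlamypos
    have hτcont : Continuous τf := continuous_iff_continuousAt.2 fun s => (hτd s).continuousAt
    set σ : ℝ → ℝ := Function.invFun τf with hσdef
    have hτ0 : τf 0 = 0 := intervalIntegral.integral_same
    have hσ0 : σ 0 = 0 := by
      conv_lhs => rw [← hτ0]
      exact hleft 0
    refine ⟨fun t => y (σ t), by show y (σ 0) = x₀; rw [hσ0, hy0], ?_⟩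
    have hFeq : ∀ s, (lamy s)⁻¹ • F (y s) = lv2 α₁ α₂ β₁ γ₂ (y s) := by
      intro s
      have : F (y s) = lamy s • lv2 α₁ α₂ β₁ γ₂ (y s) := by
        simp only [hFdef, hlamydef, hudef, hvdef]
      rw [this, smul_smul, inv_mul_cancel₀ (ne_of_gt (hlamypos s)), one_smul]
    have hxd : ∀ s : ℝ, HasDerivAt (fun t => y (σ t))
        (lv2 α₁ α₂ β₁ γ₂ (y (σ (τf s)))) (τf s) := by
      intro s
      have h1 : HasDerivAt y (F (y s)) (σ (τf s)) := by
        rw [hleft s]; exact hy s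
      have h2 := h1.scomp (τf s) (hσd s)
      rw [hFeq s] at h2
      have h3 : y s = y (σ (τf s)) := by rw [hleft s]
      rw [h3] at h2
      exact h2
    have hsurj : ∀ (r t : ℝ), τf r ≤ t → (∃ s₂, t < τf s₂) → ∃ s, r ≤ s ∧ τf s = t := by
      intro r t hrt ⟨s₂, hs₂⟩
      have hrs₂ : r < s₂ := hτmono.lt_iff_lt.mp (lt_of_le_of_lt hrt hs₂)
      obtain ⟨s, hs, hseq⟩ := intermediate_value_Icc hrs₂.le hτcont.continuousOn ⟨hrt, hs₂.le⟩
      exact ⟨s, hs.1, hseq⟩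
    by_cases hbdd : BddAbove (Set.range τf)
    · set T := sSup (Set.range τf) with hTdef
      have hlt : ∀ s, τf s < T := by
        intro s
        rcases lt_or_eq_of_le (le_csSup hbdd ⟨s, rfl⟩) with h | h
        · exact h
        · exfalso
          have h2 := le_csSup hbdd ⟨s + 1, rfl⟩
          have h3 := hτmono (lt_add_one s)
          rw [h] at h3
          linarith
      have hTpos : 0 < T := by
        have := hlt 0
        rw [hτ0] at this
        exact this
      have hex : ∀ t, t < T → ∃ s₂, t < τf s₂ := by
        intro t ht
        obtain ⟨r, ⟨s₂, rfl⟩, hr⟩ := exists_lt_of_lt_csSup (Set.range_nonempty τf) ht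
        exact ⟨s₂, hr⟩
      have hσtend : Filter.Tendsto σ (nhdsWithin T (Set.Iio T)) Filter.atTop := by
        rw [Filter.tendsto_atTop]
        intro b
        filter_upwards [Ioo_mem_nhdsLT_of_mem (Set.mem_Ioc.mpr ⟨hlt b, le_rfl⟩)] with t ht
        obtain ⟨s, hbs, hs⟩ := hsurj b t ht.1.le (hex t ht.2)
        rw [← hs, hleft]
        exact hbs
      refine Or.inr ⟨T, hTpos, ?_, fun t _ _ => ⟨hupos _, hvpos _⟩, ?_, ?_⟩
      · intro t ht0 htT
        obtain ⟨s, _, hs⟩ := hsurj 0 t (by rw [hτ0]; exact ht0) (hex t htT)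
        rw [← hs]
        exact hxd s
      · exact hUtop.comp hσtend
      · exact hVtop.comp hσtend
    · have hex : ∀ t : ℝ, ∃ s₂, t < τf s₂ := by
        intro t
        obtain ⟨r, ⟨s₂, rfl⟩, hr⟩ := not_bddAbove_iff.mp hbdd t
        exact ⟨s₂, hr⟩
      have hσtend : Filter.Tendsto σ Filter.atTop Filter.atTop := by
        rw [Filter.tendsto_atTop]
        intro b
        filter_upwards [Filter.eventually_ge_atTop (τf b)] with t ht
        obtain ⟨s, hbs, hs⟩ := hsurj b t ht (hex t)
        rw [← hs, hleft]
        exact hbs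
      refine Or.inl ⟨?_, fun t _ => ⟨hupos _, hvpos _⟩, hUtop.comp hσtend, hVtop.comp hσtend⟩
      · intro t ht0
        obtain ⟨s, _, hs⟩ := hsurj 0 t (by rw [hτ0]; exact ht0) (hex t)
        rw [← hs]
        exact hxd s
end

section
/- Let β₁, β₂, β₃, γ₁, γ₂, γ₃ be real numbers satisfying 1−β₂γ₃+β₁(1+β₂)+γ₁(1+γ₃) < 0 and 1−β₁γ₂+β₃(1+β₁)+γ₃(1+γ₂) > 0. Then the linear system x₁ − β₁x₂ − γ₁x₃ = 1, x₂ − β₂x₃ − γ₂x₁ = 1, x₃ − β₃x₁ − γ₃x₂ = 1 has no solution with x₁ > 0, x₂ > 0 and x₃ > 0. Consequently, the system ẋ₁ = α₁x₁(1−x₁+β₁x₂+γ₁x₃), ẋ₂ = α₂x₂(1−x₂+β₂x₃+γ₂x₁), ẋ₃ = α₃x₃(1−x₃+β₃x₁+γ₃x₂) (with any α₁, α₂, α₃ > 0) has no equilibrium in the open octant ℝ³₊. -/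
/-- The three-dimensional generalised Lotka–Volterra vector field
`ẋ₁ = α₁ x₁ (1 − x₁ + β₁ x₂ + γ₁ x₃)`, `ẋ₂ = α₂ x₂ (1 − x₂ + β₂ x₃ + γ₂ x₁)`,
`ẋ₃ = α₃ x₃ (1 − x₃ + β₃ x₁ + γ₃ x₂)`. -/
def lv3 (α₁ α₂ α₃ β₁ β₂ β₃ γ₁ γ₂ γ₃ : ℝ) : ℝ × ℝ × ℝ → ℝ × ℝ × ℝ := fun x =>
  (α₁ * x.1 * (1 - x.1 + β₁ * x.2.1 + γ₁ * x.2.2),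
   α₂ * x.2.1 * (1 - x.2.1 + β₂ * x.2.2 + γ₂ * x.1),
   α₃ * x.2.2 * (1 - x.2.2 + β₃ * x.1 + γ₃ * x.2.1))

/-- If `1 − β₂γ₃ + β₁(1+β₂) + γ₁(1+γ₃) < 0` and
`1 − β₁γ₂ + β₃(1+β₁) + γ₃(1+γ₂) > 0`, then the linear system
`x₁ − β₁x₂ − γ₁x₃ = 1`, `x₂ − β₂x₃ − γ₂x₁ = 1`, `x₃ − β₃x₁ − γ₃x₂ = 1` has no positive
solution; consequently the corresponding Lotka–Volterra system (for any `α₁, α₂, α₃ > 0`)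
has no equilibrium in the open positive octant. -/
theorem lv3_no_interior_equilibrium
    (β₁ β₂ β₃ γ₁ γ₂ γ₃ : ℝ)
    (h1 : 1 - β₂ * γ₃ + β₁ * (1 + β₂) + γ₁ * (1 + γ₃) < 0)
    (h2 : 0 < 1 - β₁ * γ₂ + β₃ * (1 + β₁) + γ₃ * (1 + γ₂)) :
    (¬ ∃ x₁ x₂ x₃ : ℝ, 0 < x₁ ∧ 0 < x₂ ∧ 0 < x₃ ∧
        x₁ - β₁ * x₂ - γ₁ * x₃ = 1 ∧
        x₂ - β₂ * x₃ - γ₂ * x₁ = 1 ∧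
        x₃ - β₃ * x₁ - γ₃ * x₂ = 1) ∧
    (∀ α₁ α₂ α₃ : ℝ, 0 < α₁ → 0 < α₂ → 0 < α₃ →
      ¬ ∃ x : ℝ × ℝ × ℝ, 0 < x.1 ∧ 0 < x.2.1 ∧ 0 < x.2.2 ∧
          lv3 α₁ α₂ α₃ β₁ β₂ β₃ γ₁ γ₂ γ₃ x = 0) := by

  have key : ¬ ∃ x₁ x₂ x₃ : ℝ, 0 < x₁ ∧ 0 < x₂ ∧ 0 < x₃ ∧
      x₁ - β₁ * x₂ - γ₁ * x₃ = 1 ∧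
      x₂ - β₂ * x₃ - γ₂ * x₁ = 1 ∧
      x₃ - β₃ * x₁ - γ₃ * x₂ = 1 := by
    rintro ⟨x₁, x₂, x₃, hx1, hx2, hx3, e1, e2, e3⟩
    set D : ℝ := 1 - β₂*γ₃ - β₁*γ₂ - β₁*β₂*β₃ - γ₁*γ₂*γ₃ - γ₁*β₃ with hDdef
    have hD1 : D * x₁ = 1 - β₂ * γ₃ + β₁ * (1 + β₂) + γ₁ * (1 + γ₃) := by
      rw [hDdef]
      linear_combination (1 - β₂*γ₃) * e1 + (β₁ + γ₁*γ₃) * e2 + (β₁*β₂ + γ₁) * e3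
    have hD3 : D * x₃ = 1 - β₁ * γ₂ + β₃ * (1 + β₁) + γ₃ * (1 + γ₂) := by
      rw [hDdef]
      linear_combination (γ₂*γ₃ + β₃) * e1 + (γ₃ + β₁*β₃) * e2 + (1 - β₁*γ₂) * e3
    have hDneg : D < 0 := by nlinarith
    nlinarith
  refine ⟨key, ?_⟩
  rintro α₁ α₂ α₃ ha1 ha2 ha3 ⟨⟨x₁, x₂, x₃⟩, hx1, hx2, hx3, heq⟩
  simp only [lv3, Prod.mk_eq_zero, Prod.ext_iff] at heq
  obtain ⟨f1, f2, f3⟩ := heq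
  apply key
  refine ⟨x₁, x₂, x₃, hx1, hx2, hx3, ?_, ?_, ?_⟩
  · have := (mul_eq_zero.1 f1).resolve_left (by positivity)
    linarith
  · have := (mul_eq_zero.1 f2).resolve_left (by positivity)
    linarith
  · have := (mul_eq_zero.1 f3).resolve_left (by positivity)
    linarith
end
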